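/- arXiv:1206.4752 — 2 statements merged into one kernel-verified Lean document; each statement's English description precedes it below -/
import Mathlib

section
/- Let X be a complex Banach space and m ≥ 1 an integer. (1) Let w be a standard weight on ℝ such that w(s) ≤ k·w(t) whenever 0 ≤ s ≤ t, for some constant k > 0, let J be ℝ or [0,∞), and let φ : J → X be continuous with sup_{t∈J} ‖φ(t)‖/w(t) < ∞ and with φ/w Maak ergodic with mean 0; then ‖P^mφ(t)‖ / (w(t)·(1+|t|)^m) → 0 as |t| → ∞ in J, where Pφ(t) = ∫₀ᵗ φ(s) ds and P^m is the m-fold iterate of P. (2) Analogously, if w is a standard weight on ℤ with w(s) ≤ k·w(t) whenever 0 ≤ s ≤ t, J is ℤ or ℕ, and φ : J → X satisfies sup_{t∈J} ‖φ(t)‖/w(t) < ∞ with φ/w Maak ergodic with mean 0, then ‖S^mφ(t)‖ / (w(t)·(1+|t|)^m) → 0 as |t| → ∞ in J, where Sφ(n) = Σ_{k=0}^{n−1} φ(k) for n ≥ 1, Sφ(0) = 0, Sφ(−n) = −Σ_{k=−n}^{−1} φ(k) for n ≥ 1, and S^m is the m-fold iterate of S. -/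
/-- A standard weight: conditions (1.1)-(1.3) and (2.1)-(2.3) of the paper. -/
def IsStdWeight {G : Type*} [AddCommGroup G] [TopologicalSpace G] (w : G → ℝ) : Prop :=
  Continuous w ∧ (∀ t : G, 1 ≤ w t) ∧ (∀ s t : G, w (s + t) ≤ w s * w t) ∧
    (∀ t : G, w (-t) = w t) ∧
    (∀ t : G, Summable fun n : ℕ => Real.log (w (n • t)) / (n : ℝ) ^ 2) ∧
    ((∀ t : G, w t = 1) ∨ ∀ ε > 0, IsCompact {t : G | ε ≤ 1 / w t}) ∧
    (∀ h : G, ∀ ε > 0, IsCompact {t : G | ε ≤ |(w (t + h) - w t) / w t|}) ∧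
    (∀ ε > 0, ∃ U ∈ nhds (0 : G), ∀ h ∈ U, ∀ t : G, |w (t + h) - w t| ≤ ε * w t)

/-- `ψ : J → X` is Maak ergodic (on the set `J`) with mean `M`. -/
def MaakOn {G : Type*} [AddCommMonoid G] {X : Type*} [NormedAddCommGroup X] [Module ℝ X]
    (J : Set G) (ψ : G → X) (M : X) : Prop :=
  ∀ ε > 0, ∃ F : Finset G, F.Nonempty ∧ ↑F ⊆ J ∧
    ∀ s ∈ J, ‖(F.card : ℝ)⁻¹ • (∑ u ∈ F, ψ (u + s)) - M‖ < ε

/-- The indefinite integral `Pφ(t) = ∫₀ᵗ φ(s) ds`. -/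
noncomputable def intOp {X : Type*} [NormedAddCommGroup X] [NormedSpace ℝ X]
    (f : ℝ → X) : ℝ → X :=
  fun t => ∫ s in (0 : ℝ)..t, f s

/-- The sum function `Sφ(n) = Σ_{k=0}^{n-1} φ(k)` for `n ≥ 1`, `Sφ(0) = 0`,
`Sφ(-n) = -Σ_{k=-n}^{-1} φ(k)` for `n ≥ 1`. -/
def sumOp {X : Type*} [AddCommGroup X] (f : ℤ → X) : ℤ → X := fun n =>
  if 0 ≤ n then ∑ k ∈ Finset.range n.toNat, f (k : ℤ)
  else -∑ k ∈ Finset.range (-n).toNat, f (n + (k : ℤ))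


section Zlemmas
variable {X : Type*} [AddCommGroup X] (f : ℤ → X)

lemma sumOp_succ (n : ℤ) : sumOp f (n + 1) = sumOp f n + f n := by
  rcases le_or_gt 0 n with h | h
  · have h1 : (0:ℤ) ≤ n + 1 := by omega
    have h2 : (n+1).toNat = n.toNat + 1 := by omega
    simp only [sumOp, if_pos h, if_pos h1, h2, Finset.sum_range_succ]
    congr 2
    omega
  · rcases eq_or_lt_of_le (by omega : n + 1 ≤ 0) with h1 | h1
    · have hn : n = -1 := by omega
      subst hn
      simp [sumOp]
    · have h2 : ¬ (0:ℤ) ≤ n + 1 := by omega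
      have h3 : ¬ (0:ℤ) ≤ n := by omega
      simp only [sumOp, if_neg h2, if_neg h3]
      have h4 : (-n).toNat = (-(n+1)).toNat + 1 := by omega
      rw [h4, Finset.sum_range_succ']
      have : ∀ k ∈ Finset.range (-(n+1)).toNat, f (n + ((k+1 : ℕ) : ℤ)) = f (n + 1 + (k:ℤ)) := by
        intro k _; congr 1; push_cast; ring
      rw [Finset.sum_congr rfl this]
      simp only [Nat.cast_zero, add_zero]
      abel

lemma sumOp_add_nat (u : ℤ) (t : ℕ) :
    sumOp f (u + t) = sumOp f u + ∑ s ∈ Finset.range t, f (u + s) := by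
  induction t with
  | zero => simp
  | succ t ih =>
      have : u + (t + 1 : ℕ) = (u + t) + 1 := by push_cast; ring
      rw [this, sumOp_succ, ih, Finset.sum_range_succ, add_assoc]

lemma sumOp_zero : sumOp f 0 = 0 := by simp [sumOp]
end Zlemmas

section Zn
variable {X : Type*} [NormedAddCommGroup X] (f : ℤ → X)

lemma norm_sumOp_sub (a u : ℤ) :
    ‖sumOp f (a + u) - sumOp f a‖ ≤ ∑ s ∈ Finset.range u.natAbs, ‖f (a + min u 0 + s)‖ := by
  rcases le_or_gt 0 u with h | h
  · have h1 : u.natAbs = u.toNat := by omega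
    have h2 : a + u = a + (u.toNat : ℤ) := by omega
    rw [h1, h2, sumOp_add_nat, min_eq_right h]
    simp only [add_sub_cancel_left, add_zero]
    exact norm_sum_le _ _
  · have h1 : u.natAbs = (-u).toNat := by omega
    have h2 : a = (a + u) + ((-u).toNat : ℤ) := by omega
    rw [h1, min_eq_left h.le]
    calc ‖sumOp f (a + u) - sumOp f a‖ = ‖sumOp f a - sumOp f (a+u)‖ := by rw [norm_sub_rev]
    _ = ‖∑ s ∈ Finset.range (-u).toNat, f (a + u + s)‖ := by
          rw [h2]; rw [sumOp_add_nat]; rw [← h2]; simp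
    _ ≤ ∑ s ∈ Finset.range (-u).toNat, ‖f (a + u + s)‖ := norm_sum_le _ _

lemma norm_sumOp (u : ℤ) :
    ‖sumOp f u‖ ≤ ∑ s ∈ Finset.range u.natAbs, ‖f (min u 0 + s)‖ := by
  have := norm_sumOp_sub f 0 u
  simpa [sumOp_zero] using this
end Zn


lemma card_filter_abs_le (α : ℤ) (T : ℕ) (M : ℤ) :
    (((Finset.range T).filter fun s : ℕ => |α + (s:ℤ)| ≤ M)).card ≤ (2*M+1).toNat := by
  have h : (((Finset.range T).filter fun s : ℕ => |α + (s:ℤ)| ≤ M)).card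
      ≤ (Finset.Icc (-M) M).card := by
    apply Finset.card_le_card_of_injOn (fun s : ℕ => α + (s:ℤ))
    · intro s hs
      simp only [Finset.mem_coe, Finset.mem_filter] at hs
      simp only [Finset.mem_coe, Finset.mem_Icc]
      constructor <;> [exact neg_le_of_abs_le hs.2; exact le_of_abs_le hs.2]
    · intro a _ b _ hab
      have : (a:ℤ) = b := by simpa using hab
      exact_mod_cast this
  rw [Int.card_Icc] at h
  refine h.trans (le_of_eq ?_)
  congr 1
  ring

/-- From compactness of the relative-difference level set, get a bound. -/
lemma weight_ratio_bound_int (w : ℤ → ℝ) (hw1 : ∀ t, 1 ≤ w t)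
    (hwr : ∀ h : ℤ, ∀ ε > 0, IsCompact {t : ℤ | ε ≤ |(w (t + h) - w t) / w t|})
    (u : ℤ) {ε : ℝ} (hε : 0 < ε) :
    ∃ M : ℤ, 0 ≤ M ∧ ∀ σ : ℤ, M ≤ |σ| → |w (σ + u) - w σ| ≤ ε * w σ := by
  obtain ⟨r, hr⟩ := (Metric.isBounded_iff_subset_closedBall 0).1 (hwr u ε hε).isBounded
  refine ⟨max 0 (⌈r⌉ + 1), le_max_left _ _, fun σ hσ => ?_⟩
  have hpos : 0 < w σ := lt_of_lt_of_le zero_lt_one (hw1 σ)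
  have hnot : σ ∉ {t : ℤ | ε ≤ |(w (t + u) - w t) / w t|} := by
    intro hmem
    have := hr hmem
    simp only [Metric.mem_closedBall, Int.dist_eq] at this
    have h1 : |(σ:ℝ)| ≤ r := by simpa using this
    have h2 : (⌈r⌉ + 1 : ℤ) ≤ |σ| := le_trans (le_max_right _ _) hσ
    have h3 : ((⌈r⌉ + 1 : ℤ) : ℝ) ≤ |(σ:ℝ)| := by
      calc ((⌈r⌉ + 1 : ℤ) : ℝ) ≤ ((|σ| : ℤ) : ℝ) := by exact_mod_cast h2
      _ = |(σ:ℝ)| := by push_cast; rfl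
    have h4 : r < ((⌈r⌉ + 1 : ℤ) : ℝ) := by
      push_cast; linarith [Int.le_ceil r]
    linarith
  simp only [Set.mem_setOf_eq, not_le] at hnot
  have := hnot.le
  rw [abs_div, abs_of_pos hpos, div_le_iff₀ hpos] at this
  linarith


section Helpers
variable {X : Type*} [NormedAddCommGroup X] [NormedSpace ℝ X]

lemma inv_card_smul_norm_le {G : Type*} (F : Finset G) (hne : F.Nonempty) (f : G → X)
    {B : ℝ} (h : ∀ u ∈ F, ‖f u‖ ≤ B) : ‖(F.card : ℝ)⁻¹ • ∑ u ∈ F, f u‖ ≤ B := by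
  have hc : (0:ℝ) < F.card := by exact_mod_cast Finset.card_pos.2 hne
  rw [norm_smul, Real.norm_eq_abs, abs_of_pos (inv_pos.2 hc)]
  calc (F.card : ℝ)⁻¹ * ‖∑ u ∈ F, f u‖ ≤ (F.card : ℝ)⁻¹ * ∑ u ∈ F, ‖f u‖ := by
        exact mul_le_mul_of_nonneg_left (norm_sum_le _ _) (by positivity)
    _ ≤ (F.card : ℝ)⁻¹ * (F.card * B) := by
        apply mul_le_mul_of_nonneg_left _ (by positivity)
        calc ∑ u ∈ F, ‖f u‖ ≤ F.card • B := Finset.sum_le_card_nsmul F _ B h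
        _ = F.card * B := nsmul_eq_mul _ _
    _ = B := by field_simp

lemma avg_shift_bound {G : Type*} [AddCommGroup G] (w : G → ℝ) (hw1 : ∀ t, 1 ≤ w t)
    (φ : G → X) (C : ℝ) (F : Finset G) (hne : F.Nonempty) (σ : G) (ε₁ : ℝ) (hε₁ : 0 ≤ ε₁)
    (hψb : ∀ u ∈ F, ‖φ (u + σ)‖ ≤ C * w (u + σ))
    (hdiff : ∀ u ∈ F, |w (u + σ) - w σ| ≤ ε₁ * w σ)
    (havg : ‖(F.card : ℝ)⁻¹ • ∑ u ∈ F, (w (u + σ))⁻¹ • φ (u + σ)‖ ≤ ε₁) :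
    ‖(F.card : ℝ)⁻¹ • ∑ u ∈ F, φ (u + σ)‖ ≤ ε₁ * (1 + C) * w σ := by
  have hwpos : ∀ x : G, (0:ℝ) < w x := fun x => lt_of_lt_of_le zero_lt_one (hw1 x)
  have hψnorm : ∀ u ∈ F, ‖(w (u + σ))⁻¹ • φ (u + σ)‖ ≤ C := by
    intro u hu
    rw [norm_smul, Real.norm_eq_abs, abs_of_pos (inv_pos.2 (hwpos _))]
    rw [inv_mul_le_iff₀ (hwpos _)]
    calc ‖φ (u+σ)‖ ≤ C * w (u+σ) := hψb u hu
      _ = w (u+σ) * C := by ring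
  have hdecomp : ∀ u ∈ F, φ (u + σ) =
      w σ • ((w (u + σ))⁻¹ • φ (u + σ)) + (w (u + σ) - w σ) • ((w (u + σ))⁻¹ • φ (u + σ)) := by
    intro u _
    rw [← add_smul, add_sub_cancel, smul_inv_smul₀ (ne_of_gt (hwpos _))]
  rw [Finset.sum_congr rfl hdecomp, Finset.sum_add_distrib, smul_add]
  calc ‖(F.card : ℝ)⁻¹ • ∑ u ∈ F, w σ • ((w (u + σ))⁻¹ • φ (u + σ)) +
        (F.card : ℝ)⁻¹ • ∑ u ∈ F, (w (u + σ) - w σ) • ((w (u + σ))⁻¹ • φ (u + σ))‖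
      ≤ ‖(F.card : ℝ)⁻¹ • ∑ u ∈ F, w σ • ((w (u + σ))⁻¹ • φ (u + σ))‖ +
        ‖(F.card : ℝ)⁻¹ • ∑ u ∈ F, (w (u + σ) - w σ) • ((w (u + σ))⁻¹ • φ (u + σ))‖ :=
        norm_add_le _ _
    _ ≤ w σ * ε₁ + ε₁ * w σ * C := by
        apply add_le_add
        · rw [← Finset.smul_sum, smul_comm, norm_smul, Real.norm_eq_abs,
            abs_of_pos (hwpos σ)]
          exact mul_le_mul_of_nonneg_left havg (hwpos σ).le
        · apply inv_card_smul_norm_le F hne _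
          intro u hu
          rw [norm_smul, Real.norm_eq_abs]
          calc |w (u+σ) - w σ| * ‖(w (u + σ))⁻¹ • φ (u + σ)‖
              ≤ (ε₁ * w σ) * C := by
                apply mul_le_mul (hdiff u hu) (hψnorm u hu) (norm_nonneg _)
                exact mul_nonneg hε₁ (hwpos σ).le
            _ = ε₁ * w σ * C := by ring
    _ = ε₁ * (1 + C) * w σ := by ring

lemma w_abs_le' {G : Type*} [AddCommGroup G] [LinearOrder G] [IsOrderedAddMonoid G] (w : G → ℝ)
    (hwe : ∀ t, w (-t) = w t) (k : ℝ) (hmono : ∀ s t : G, 0 ≤ s → s ≤ t → w s ≤ k * w t)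
    {a b : G} (h : |a| ≤ |b|) : w a ≤ k * w b := by
  have hwa : w |a| = w a := by
    rcases abs_cases a with ⟨h1, _⟩ | ⟨h1, _⟩ <;> rw [h1]
    · exact hwe a
  have hwb : w |b| = w b := by
    rcases abs_cases b with ⟨h1, _⟩ | ⟨h1, _⟩ <;> rw [h1]
    · exact hwe b
  rw [← hwa, ← hwb]
  exact hmono _ _ (abs_nonneg a) h

end Helpers

section Count
lemma sum_avg_bound {X : Type*} [NormedAddCommGroup X]
    (g : ℤ → X) (α : ℤ) (T : ℕ) (s₀ : ℤ) (K1 Kε : ℝ) (hK1 : 0 ≤ K1) (hKε : 0 ≤ Kε)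
    (h1 : ∀ s ∈ Finset.range T, ‖g (α + s)‖ ≤ K1)
    (h2 : ∀ s ∈ Finset.range T, s₀ ≤ |α + (s:ℤ)| → ‖g (α + s)‖ ≤ Kε) :
    ∑ s ∈ Finset.range T, ‖g (α + s)‖ ≤ ((2*s₀+1).toNat : ℝ) * K1 + T * Kε := by
  have key : ∀ s ∈ Finset.range T,
      ‖g (α + s)‖ ≤ (if |α + (s:ℤ)| ≤ s₀ then K1 else 0) + Kε := by
    intro s hs
    by_cases hc : |α + (s:ℤ)| ≤ s₀
    · rw [if_pos hc]; linarith [h1 s hs]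
    · rw [if_neg hc]
      push_neg at hc
      linarith [h2 s hs hc.le]
  calc ∑ s ∈ Finset.range T, ‖g (α + s)‖
      ≤ ∑ s ∈ Finset.range T, ((if |α + (s:ℤ)| ≤ s₀ then K1 else 0) + Kε) :=
        Finset.sum_le_sum key
    _ = (∑ s ∈ Finset.range T, if |α + (s:ℤ)| ≤ s₀ then K1 else 0) + T * Kε := by
        rw [Finset.sum_add_distrib, Finset.sum_const, Finset.card_range, nsmul_eq_mul]
    _ ≤ ((2*s₀+1).toNat : ℝ) * K1 + T * Kε := by
        apply add_le_add_left
        rw [← Finset.sum_filter]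
        rw [Finset.sum_const, nsmul_eq_mul]
        apply mul_le_mul_of_nonneg_right _ hK1
        exact_mod_cast card_filter_abs_le α T s₀

lemma card_filter_abs_le' : True := trivial
end Count


section CoreZ
variable {X : Type*} [NormedAddCommGroup X] [NormedSpace ℝ X]

set_option maxHeartbeats 2000000 in
lemma coreZ (w : ℤ → ℝ) (hw1 : ∀ t, 1 ≤ w t) (hwsub : ∀ s t, w (s + t) ≤ w s * w t)
    (hwe : ∀ t, w (-t) = w t)
    (hwr : ∀ h : ℤ, ∀ ε > 0, IsCompact {t : ℤ | ε ≤ |(w (t + h) - w t) / w t|})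
    (k : ℝ) (hk : 1 ≤ k) (hmono : ∀ s t : ℤ, 0 ≤ s → s ≤ t → w s ≤ k * w t)
    (J : Set ℤ) (hJ : J = Set.univ ∨ J = {n : ℤ | 0 ≤ n})
    (φ : ℤ → X) (C : ℝ) (hC : 0 ≤ C) (hφb : ∀ t ∈ J, ‖φ t‖ ≤ C * w t)
    (hM : MaakOn J (fun t => (w t)⁻¹ • φ t) 0)
    {ε : ℝ} (hε : 0 < ε) :
    ∃ R : ℝ, ∀ n ∈ J, R ≤ |(n : ℝ)| → ‖sumOp φ n‖ ≤ ε * (w n * (1 + |(n : ℝ)|)) := by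
  have hwpos : ∀ x : ℤ, (0:ℝ) < w x := fun x => lt_of_lt_of_le zero_lt_one (hw1 x)
  have hk0 : (0:ℝ) < k := lt_of_lt_of_le zero_lt_one hk
  -- J facts
  have hJ0 : ∀ n : ℤ, 0 ≤ n → n ∈ J := by
    rcases hJ with rfl | rfl
    · intro n _; trivial
    · intro n hn; exact hn
  have hJmem : ∀ u ∈ J, ∀ x : ℤ, min u 0 ≤ x → x ∈ J := by
    rcases hJ with rfl | rfl
    · intro u _ x _; trivial
    · intro u hu x hx
      simp only [Set.mem_setOf_eq] at hu ⊢
      omega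
  -- the small parameter
  set ε₁ : ℝ := ε / (2 * (1 + C) * k) with hε₁def
  have hε₁ : 0 < ε₁ := by
    apply div_pos hε
    positivity
  obtain ⟨F, hne, hFJ, havg⟩ := hM ε₁ hε₁
  have hNpos : (0:ℝ) < F.card := by exact_mod_cast Finset.card_pos.2 hne
  have hNne : ((F.card : ℝ)) ≠ 0 := ne_of_gt hNpos
  set c : ℝ := (F.card : ℝ)⁻¹ with hcdef
  -- constants from F
  set W : ℝ := F.sup' hne w with hWdef
  have hW : ∀ u ∈ F, w u ≤ W := fun u hu => Finset.le_sup' w hu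
  have hW1 : (1:ℝ) ≤ W := by
    obtain ⟨u, hu⟩ := hne
    exact le_trans (hw1 u) (hW u hu)
  set T₀ : ℤ := F.sup' hne (fun u => |u|) with hT₀def
  have hT₀ : ∀ u ∈ F, |u| ≤ T₀ := fun u hu => Finset.le_sup' _ hu
  have hT₀0 : 0 ≤ T₀ := by
    obtain ⟨u, hu⟩ := hne
    exact le_trans (abs_nonneg u) (hT₀ u hu)
  -- s₀ from the weight ratio condition
  have hex : ∀ u : ℤ, ∃ M : ℤ, 0 ≤ M ∧ ∀ σ : ℤ, M ≤ |σ| → |w (σ + u) - w σ| ≤ ε₁ * w σ :=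
    fun u => weight_ratio_bound_int w hw1 hwr u hε₁
  choose Mf hMf0 hMf using hex
  set s₀ : ℤ := max 1 (F.sup' hne Mf) with hs₀def
  have hs₀1 : 1 ≤ s₀ := le_max_left _ _
  have hs₀F : ∀ u ∈ F, Mf u ≤ s₀ := fun u hu => le_trans (Finset.le_sup' Mf hu) (le_max_right _ _)
  -- pointwise bound on the averaged function
  have hmemadd : ∀ u ∈ F, ∀ σ ∈ J, u + σ ∈ J := by
    rcases hJ with rfl | rfl
    · intro u _ σ _; trivial
    · intro u hu σ hσ
      have := hFJ hu
      simp only [Set.mem_setOf_eq] at this hσ ⊢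
      omega
  have hψb : ∀ σ ∈ J, ∀ u ∈ F, ‖φ (u + σ)‖ ≤ C * w (u + σ) :=
    fun σ hσ u hu => hφb _ (hmemadd u hu σ hσ)
  have havg1 : ∀ σ ∈ J, ‖c • ∑ u ∈ F, φ (u + σ)‖ ≤ C * W * k * w σ := by
    intro σ hσ
    apply inv_card_smul_norm_le F hne
    intro u hu
    calc ‖φ (u + σ)‖ ≤ C * w (u + σ) := hψb σ hσ u hu
      _ ≤ C * (w u * w σ) := mul_le_mul_of_nonneg_left (hwsub u σ) hC
      _ ≤ C * (W * w σ) := by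
          apply mul_le_mul_of_nonneg_left _ hC
          exact mul_le_mul_of_nonneg_right (hW u hu) (hwpos σ).le
      _ ≤ C * W * k * w σ := by
          have h0 : 0 ≤ C * W * w σ * (k - 1) := by
            apply mul_nonneg _ (by linarith : (0:ℝ) ≤ k - 1)
            apply mul_nonneg (mul_nonneg hC (by linarith : (0:ℝ) ≤ W)) (hwpos σ).le
          nlinarith [h0]
  have havg2 : ∀ σ ∈ J, s₀ ≤ |σ| → ‖c • ∑ u ∈ F, φ (u + σ)‖ ≤ ε₁ * (1 + C) * w σ := by
    intro σ hσ hs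
    apply avg_shift_bound w hw1 φ C F hne σ ε₁ hε₁.le
    · exact fun u hu => hψb σ hσ u hu
    · intro u hu
      have := hMf u σ (le_trans (hs₀F u hu) hs)
      rwa [add_comm σ u] at this
    · have := havg σ hσ
      rw [sub_zero] at this
      exact this.le
  -- constants
  set K₁ : ℝ := C * W * k * k with hK₁def
  have hK₁0 : 0 ≤ K₁ := by positivity
  set K₂ : ℝ := C * k * w T₀ * T₀ with hK₂def
  have hK₂0 : 0 ≤ K₂ := by
    have := hwpos T₀
    have : (0:ℝ) ≤ (T₀:ℝ) := by exact_mod_cast hT₀0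
    positivity
  set K₃ : ℝ := C * (k * w T₀) * T₀ with hK₃def
  have hK₃0 : 0 ≤ K₃ := by
    have h1 := hwpos T₀
    have h2 : (0:ℝ) ≤ (T₀:ℝ) := by exact_mod_cast hT₀0
    positivity
  -- bound on sumOp φ u for u ∈ F
  have hSu : ∀ u ∈ F, ‖sumOp φ u‖ ≤ K₂ := by
    intro u hu
    calc ‖sumOp φ u‖ ≤ ∑ s ∈ Finset.range u.natAbs, ‖φ (min u 0 + s)‖ := norm_sumOp φ u
      _ ≤ ∑ s ∈ Finset.range u.natAbs, (C * (k * w T₀)) := by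
          apply Finset.sum_le_sum
          intro s hs
          simp only [Finset.mem_range] at hs
          have hx : |min u 0 + (s:ℤ)| ≤ |T₀| := by
            rw [abs_of_nonneg hT₀0]
            have := hT₀ u hu
            rcases abs_cases u with ⟨h1, h2⟩ | ⟨h1, h2⟩ <;>
              rcases abs_cases (min u 0 + (s:ℤ)) with ⟨h3, h4⟩ | ⟨h3, h4⟩ <;> omega
          have hxJ : (min u 0 + (s:ℤ)) ∈ J := by
            apply hJmem u (hFJ hu)
            omega
          calc ‖φ (min u 0 + s)‖ ≤ C * w (min u 0 + s) := hφb _ hxJ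
            _ ≤ C * (k * w T₀) :=
              mul_le_mul_of_nonneg_left (w_abs_le' w hwe k hmono hx) hC
      _ = u.natAbs * (C * (k * w T₀)) := by rw [Finset.sum_const, Finset.card_range, nsmul_eq_mul]
      _ ≤ K₂ := by
          rw [hK₂def]
          have h1 : ((u.natAbs : ℕ) : ℝ) ≤ (T₀ : ℝ) := by
            have h2 : (u.natAbs : ℤ) ≤ T₀ := by
              have h3 := hT₀ u hu
              rcases abs_cases u with ⟨h4, _⟩ | ⟨h4, _⟩ <;> omega
            calc ((u.natAbs : ℕ) : ℝ) = ((u.natAbs : ℤ) : ℝ) := (Int.cast_natCast _).symm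
              _ ≤ (T₀ : ℝ) := Int.cast_le.mpr h2
          have h3 : (0:ℝ) ≤ C * (k * w T₀) := by
            have := (hwpos T₀).le
            positivity
          calc (u.natAbs : ℝ) * (C * (k * w T₀)) ≤ (T₀:ℝ) * (C * (k * w T₀)) :=
                mul_le_mul_of_nonneg_right h1 h3
            _ = C * k * w T₀ * T₀ := by ring
  -- final constant and R
  set Ktot : ℝ := ((2*s₀+1).toNat : ℝ) * K₁ + K₂ + K₃ with hKtotdef
  have hKtot0 : 0 ≤ Ktot := by positivity
  refine ⟨max 1 (2 * Ktot / ε), ?_⟩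
  intro n hn hR
  have hRn : 2 * Ktot / ε ≤ |(n:ℝ)| := le_trans (le_max_right _ _) hR
  have hKtotn : Ktot ≤ ε / 2 * |(n:ℝ)| := by
    rw [div_le_iff₀ hε] at hRn
    linarith
  -- the main decomposition, by cases on the sign of n
  -- D_u bound
  have hDu : ∀ u ∈ F, ‖sumOp φ n - sumOp φ (n + u)‖ ≤ K₃ * w n := by
    intro u hu
    rw [norm_sub_rev]
    calc ‖sumOp φ (n + u) - sumOp φ n‖
        ≤ ∑ s ∈ Finset.range u.natAbs, ‖φ (n + min u 0 + s)‖ := norm_sumOp_sub φ n u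
      _ ≤ ∑ s ∈ Finset.range u.natAbs, (C * (k * w T₀) * w n) := by
          apply Finset.sum_le_sum
          intro s hs
          simp only [Finset.mem_range] at hs
          have hTu := hT₀ u hu
          have hx : |n + min u 0 + (s:ℤ)| ≤ |(|n| + T₀)| := by
            have h0 : 0 ≤ |n| + T₀ := by positivity
            rw [abs_of_nonneg h0]
            rcases abs_cases u with ⟨h1, h2⟩ | ⟨h1, h2⟩ <;>
              rcases abs_cases n with ⟨h3, h4⟩ | ⟨h3, h4⟩ <;>
              rcases abs_cases (n + min u 0 + (s:ℤ)) with ⟨h5, h6⟩ | ⟨h5, h6⟩ <;> omega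
          have hxJ : (n + min u 0 + (s:ℤ)) ∈ J := by
            rcases hJ with rfl | rfl
            · trivial
            · have hu' := hFJ hu
              simp only [Set.mem_setOf_eq] at hu' hn ⊢
              omega
          calc ‖φ (n + min u 0 + s)‖ ≤ C * w (n + min u 0 + s) := hφb _ hxJ
            _ ≤ C * (k * w (|n| + T₀)) :=
                mul_le_mul_of_nonneg_left (w_abs_le' w hwe k hmono hx) hC
            _ ≤ C * (k * (w |n| * w T₀)) := by
                apply mul_le_mul_of_nonneg_left _ hC
                exact mul_le_mul_of_nonneg_left (hwsub _ _) hk0.le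
            _ = C * (k * w T₀) * w n := by
                have : w |n| = w n := by
                  rcases abs_cases n with ⟨h1, _⟩ | ⟨h1, _⟩ <;> rw [h1]
                  · exact hwe n
                rw [this]; ring
      _ = u.natAbs * (C * (k * w T₀) * w n) := by
          rw [Finset.sum_const, Finset.card_range, nsmul_eq_mul]
      _ ≤ K₃ * w n := by
          have h1 : ((u.natAbs : ℕ) : ℝ) ≤ (T₀ : ℝ) := by
            have h2 : (u.natAbs : ℤ) ≤ T₀ := by
              have h3 := hT₀ u hu
              rcases abs_cases u with ⟨h4, _⟩ | ⟨h4, _⟩ <;> omega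
            calc ((u.natAbs : ℕ) : ℝ) = ((u.natAbs : ℤ) : ℝ) := (Int.cast_natCast _).symm
              _ ≤ (T₀ : ℝ) := Int.cast_le.mpr h2
          have h3 : (0:ℝ) ≤ C * (k * w T₀) * w n := by
            have := (hwpos T₀).le; have := (hwpos n).le
            positivity
          calc (u.natAbs:ℝ) * (C * (k * w T₀) * w n) ≤ (T₀:ℝ) * (C * (k * w T₀) * w n) :=
                mul_le_mul_of_nonneg_right h1 h3
            _ = K₃ * w n := by rw [hK₃def]; ring
  -- T and α
  obtain ⟨T, α, hTα, hTabsJ, hTabs⟩ :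
      ∃ (T : ℕ) (α : ℤ), (∀ u ∈ F, sumOp φ (n + u) - sumOp φ u =
          (if 0 ≤ n then (1:ℝ) else -1) • ∑ s ∈ Finset.range T, φ (u + (α + s))) ∧
        (∀ s ∈ Finset.range T, (α + (s:ℤ)) ∈ J ∧ |α + (s:ℤ)| ≤ |n|) ∧ (T : ℝ) = |(n:ℝ)| := by
    rcases le_or_gt 0 n with hn0 | hn0
    · refine ⟨n.toNat, 0, ?_, ?_, ?_⟩
      · intro u hu
        rw [if_pos hn0, one_smul]
        have e1 := sumOp_add_nat φ u n.toNat
        have e2 : u + (n.toNat : ℤ) = n + u := by omega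
        rw [e2] at e1
        rw [e1]
        simp only [zero_add, add_sub_cancel_left]
      · intro s hs
        simp only [Finset.mem_range] at hs
        constructor
        · exact hJ0 _ (by omega)
        · rcases abs_cases n with ⟨h1, h2⟩ | ⟨h1, h2⟩ <;>
            rcases abs_cases ((0:ℤ) + (s:ℤ)) with ⟨h5, h6⟩ | ⟨h5, h6⟩ <;> omega
      · rw [abs_of_nonneg (by exact_mod_cast hn0 : (0:ℝ) ≤ (n:ℝ))]
        exact_mod_cast Int.toNat_of_nonneg hn0
    · have hJu : J = Set.univ := by
        rcases hJ with rfl | rfl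
        · rfl
        · simp only [Set.mem_setOf_eq] at hn; omega
      refine ⟨(-n).toNat, n, ?_, ?_, ?_⟩
      · intro u hu
        rw [if_neg (by omega : ¬ (0:ℤ) ≤ n), neg_one_smul ℝ]
        have e1 := sumOp_add_nat φ (u + n) (-n).toNat
        have e2 : u + n + ((-n).toNat : ℤ) = u := by omega
        rw [e2] at e1
        have : ∀ s ∈ Finset.range (-n).toNat, φ (u + n + (s:ℤ)) = φ (u + (n + (s:ℤ))) := by
          intro s _; congr 1; ring
        rw [Finset.sum_congr rfl this] at e1
        have e3 : n + u = u + n := by ring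
        rw [e3, e1]
        abel
      · intro s hs
        simp only [Finset.mem_range] at hs
        constructor
        · rw [hJu]; trivial
        · rcases abs_cases (n + (s:ℤ)) with ⟨h1, h2⟩ | ⟨h1, h2⟩ <;>
            rcases abs_cases n with ⟨h3, h4⟩ | ⟨h3, h4⟩ <;> omega
      · have h1 : ((-n).toNat : ℝ) = ((((-n).toNat : ℤ)) : ℝ) := by norm_cast
        rw [h1]
        have h2 : ((-n).toNat : ℤ) = -n := by omega
        rw [h2]
        rw [abs_of_neg (by exact_mod_cast hn0 : (n:ℝ) < 0)]
        norm_cast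
  -- the identity
  have hid : ∀ u ∈ F, sumOp φ n =
      ((if 0 ≤ n then (1:ℝ) else -1) • ∑ s ∈ Finset.range T, φ (u + (α + s))) + sumOp φ u +
        (sumOp φ n - sumOp φ (n + u)) := by
    intro u hu
    rw [← hTα u hu]
    abel
  have hrep : sumOp φ n = c • ∑ u ∈ F,
      (((if 0 ≤ n then (1:ℝ) else -1) • ∑ s ∈ Finset.range T, φ (u + (α + s))) + sumOp φ u +
        (sumOp φ n - sumOp φ (n + u))) := by
    have h1 : ∑ u ∈ F,
        (((if 0 ≤ n then (1:ℝ) else -1) • ∑ s ∈ Finset.range T, φ (u + (α + s))) + sumOp φ u +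
          (sumOp φ n - sumOp φ (n + u))) = F.card • sumOp φ n := by
      rw [Finset.sum_congr rfl (fun u hu => (hid u hu).symm), Finset.sum_const]
    rw [h1, hcdef, ← Nat.cast_smul_eq_nsmul ℝ, inv_smul_smul₀ hNne]
  -- three pieces
  rw [hrep, Finset.sum_add_distrib, Finset.sum_add_distrib, smul_add, smul_add]
  have hA : ‖c • ∑ u ∈ F, (if 0 ≤ n then (1:ℝ) else -1) • ∑ s ∈ Finset.range T, φ (u + (α + s))‖
      ≤ ((2*s₀+1).toNat : ℝ) * (K₁ * w n) + T * (ε₁ * (1 + C) * (k * w n)) := by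
    have hcomm : c • ∑ u ∈ F, (if 0 ≤ n then (1:ℝ) else -1) •
        ∑ s ∈ Finset.range T, φ (u + (α + s)) =
        (if 0 ≤ n then (1:ℝ) else -1) • ∑ s ∈ Finset.range T, c • ∑ u ∈ F, φ (u + (α + s)) := by
      rw [← Finset.smul_sum, smul_comm, Finset.sum_comm]
      congr 1
      rw [Finset.smul_sum]
    have hone : ‖(if 0 ≤ n then (1:ℝ) else -1)‖ = 1 := by
      split <;> simp
    rw [hcomm, norm_smul, hone, one_mul]
    calc ‖∑ s ∈ Finset.range T, c • ∑ u ∈ F, φ (u + (α + s))‖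
        ≤ ∑ s ∈ Finset.range T, ‖(fun σ => c • ∑ u ∈ F, φ (u + σ)) (α + s)‖ :=
          norm_sum_le _ _
      _ ≤ ((2*s₀+1).toNat : ℝ) * (K₁ * w n) + T * (ε₁ * (1 + C) * (k * w n)) := by
          apply sum_avg_bound (fun σ => c • ∑ u ∈ F, φ (u + σ)) α T s₀
          · have := (hwpos n).le; positivity
          · have h0 := (hwpos n).le
            have h1 : (0:ℝ) ≤ 1 + C := by linarith
            positivity
          · intro s hs
            obtain ⟨hmem, habs⟩ := hTabsJ s hs
            calc ‖c • ∑ u ∈ F, φ (u + (α + s))‖ ≤ C * W * k * w (α + s) := havg1 _ hmem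
              _ ≤ C * W * k * (k * w n) := by
                  apply mul_le_mul_of_nonneg_left (w_abs_le' w hwe k hmono habs)
                  have h1 : (0:ℝ) ≤ W := by linarith
                  positivity
              _ = K₁ * w n := by rw [hK₁def]; ring
          · intro s hs hbig
            obtain ⟨hmem, habs⟩ := hTabsJ s hs
            calc ‖c • ∑ u ∈ F, φ (u + (α + s))‖ ≤ ε₁ * (1 + C) * w (α + s) :=
                  havg2 _ hmem hbig
              _ ≤ ε₁ * (1 + C) * (k * w n) := by
                  apply mul_le_mul_of_nonneg_left (w_abs_le' w hwe k hmono habs)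
                  have h1 : (0:ℝ) ≤ 1 + C := by linarith
                  positivity
  have hB : ‖c • ∑ u ∈ F, sumOp φ u‖ ≤ K₂ := inv_card_smul_norm_le F hne _ hSu
  have hD : ‖c • ∑ u ∈ F, (sumOp φ n - sumOp φ (n + u))‖ ≤ K₃ * w n :=
    inv_card_smul_norm_le F hne _ hDu
  have hεhalf : (T:ℝ) * (ε₁ * (1 + C) * (k * w n)) ≤ ε / 2 * |(n:ℝ)| * w n := by
    rw [hTabs]
    have heq : ε₁ * (1 + C) * k = ε / 2 := by
      rw [hε₁def]
      field_simp
    apply le_of_eq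
    calc |(n:ℝ)| * (ε₁ * (1 + C) * (k * w n)) = (ε₁ * (1 + C) * k) * (|(n:ℝ)| * w n) := by
          ring
      _ = ε / 2 * |(n:ℝ)| * w n := by rw [heq]; ring
  have hwn1 : (1:ℝ) ≤ w n := hw1 n
  calc ‖c • ∑ u ∈ F, (if 0 ≤ n then (1:ℝ) else -1) • ∑ s ∈ Finset.range T, φ (u + (α + s)) +
        c • ∑ u ∈ F, sumOp φ u + c • ∑ u ∈ F, (sumOp φ n - sumOp φ (n + u))‖
      ≤ ‖c • ∑ u ∈ F, (if 0 ≤ n then (1:ℝ) else -1) • ∑ s ∈ Finset.range T, φ (u + (α + s))‖ +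
        ‖c • ∑ u ∈ F, sumOp φ u‖ + ‖c • ∑ u ∈ F, (sumOp φ n - sumOp φ (n + u))‖ :=
        norm_add₃_le
    _ ≤ (((2*s₀+1).toNat : ℝ) * (K₁ * w n) + T * (ε₁ * (1 + C) * (k * w n))) + K₂ +
        K₃ * w n := by
        apply add_le_add (add_le_add hA hB) hD
    _ ≤ Ktot * w n + ε / 2 * |(n:ℝ)| * w n := by
        rw [hKtotdef]
        have h1 : K₂ ≤ K₂ * w n := le_mul_of_one_le_right hK₂0 hwn1
        have h2 : (((2*s₀+1).toNat : ℝ) * K₁ + K₂ + K₃) * w n =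
            ((2*s₀+1).toNat : ℝ) * (K₁ * w n) + K₂ * w n + K₃ * w n := by ring
        rw [h2]
        linarith [hεhalf]
    _ ≤ ε / 2 * |(n:ℝ)| * w n + ε / 2 * |(n:ℝ)| * w n := by
        have h9 := mul_le_mul_of_nonneg_right hKtotn (hwpos n).le
        linarith
    _ ≤ ε * (w n * (1 + |(n:ℝ)|)) := by
        have h1 : (0:ℝ) ≤ |(n:ℝ)| := abs_nonneg _
        nlinarith [hwpos n]
end CoreZ

section IterZ
variable {X : Type*} [NormedAddCommGroup X] [NormedSpace ℝ X]

set_option maxHeartbeats 1000000 in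
lemma iterZ (w : ℤ → ℝ) (hw1 : ∀ t, 1 ≤ w t) (hwe : ∀ t, w (-t) = w t)
    (k : ℝ) (hk : 1 ≤ k) (hmono : ∀ s t : ℤ, 0 ≤ s → s ≤ t → w s ≤ k * w t)
    (J : Set ℤ) (hJ : J = Set.univ ∨ J = {n : ℤ | 0 ≤ n})
    (g : ℤ → X) (j : ℕ)
    (hdec : ∀ ε > 0, ∃ R : ℝ, ∀ n ∈ J, R ≤ |(n:ℝ)| →
      ‖g n‖ ≤ ε * (w n * (1 + |(n:ℝ)|) ^ j)) :
    ∀ ε > 0, ∃ R : ℝ, ∀ n ∈ J, R ≤ |(n:ℝ)| →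
      ‖sumOp g n‖ ≤ ε * (w n * (1 + |(n:ℝ)|) ^ (j+1)) := by
  intro ε hε
  have hwpos : ∀ x : ℤ, (0:ℝ) < w x := fun x => lt_of_lt_of_le zero_lt_one (hw1 x)
  have hk0 : (0:ℝ) < k := lt_of_lt_of_le zero_lt_one hk
  set ε₁ : ℝ := ε / (2 * k) with hε₁def
  have hε₁ : 0 < ε₁ := by positivity
  obtain ⟨R₁, hR₁⟩ := hdec ε₁ hε₁
  set R₂ : ℝ := max R₁ 0 with hR₂def
  have hR₂0 : 0 ≤ R₂ := le_max_right _ _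
  have hR₂ : ∀ n ∈ J, R₂ ≤ |(n:ℝ)| → ‖g n‖ ≤ ε₁ * (w n * (1 + |(n:ℝ)|) ^ j) :=
    fun n hn h => hR₁ n hn (le_trans (le_max_left _ _) h)
  set M : ℤ := ⌈R₂⌉ + 1 with hMdef
  have hM1 : 1 ≤ M := by
    have : (0:ℤ) ≤ ⌈R₂⌉ := Int.ceil_nonneg hR₂0
    omega
  have hMR : R₂ ≤ (M:ℝ) := by
    have := Int.le_ceil R₂
    have h2 : ((⌈R₂⌉:ℤ):ℝ) ≤ ((M:ℤ):ℝ) := by exact_mod_cast (by omega : ⌈R₂⌉ ≤ M)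
    linarith
  have hIccne : (Finset.Icc (-M) M).Nonempty := ⟨0, by simp; omega⟩
  set B : ℝ := max ((Finset.Icc (-M) M).sup' hIccne (fun x => ‖g x‖)) 0 with hBdef
  have hB0 : 0 ≤ B := le_max_right _ _
  have hBbd : ∀ x : ℤ, |x| ≤ M → ‖g x‖ ≤ B := by
    intro x hx
    have hmem : x ∈ Finset.Icc (-M) M := by
      simp only [Finset.mem_Icc]
      rcases abs_cases x with ⟨h1, _⟩ | ⟨h1, _⟩ <;> omega
    exact le_trans (Finset.le_sup' (fun x => ‖g x‖) hmem) (le_max_left _ _)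
  -- choose R
  set TwoM : ℝ := ((2*M+1).toNat : ℝ) with hTwoMdef
  have hTwoM0 : 0 ≤ TwoM := Nat.cast_nonneg _
  refine ⟨max (4 * TwoM * B / ε + 1) (4 * TwoM * ε₁ * k / ε + 1), ?_⟩
  intro n hn hR
  have hn1 : 4 * TwoM * B / ε ≤ |(n:ℝ)| := by
    have := le_trans (le_max_left _ _) hR; linarith
  have hn2 : 4 * TwoM * ε₁ * k / ε ≤ |(n:ℝ)| := by
    have := le_trans (le_max_right _ _) hR; linarith
  have habs0 : (0:ℝ) ≤ |(n:ℝ)| := abs_nonneg _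
  set P : ℝ := (1 + |(n:ℝ)|) ^ j with hPdef
  have hP1 : (1:ℝ) ≤ P := by rw [hPdef]; exact one_le_pow₀ (by linarith)
  have hP0 : (0:ℝ) < P := lt_of_lt_of_le zero_lt_one hP1
  set Kε : ℝ := ε₁ * (k * (w n * P)) with hKεdef
  have hKε0 : 0 ≤ Kε := by
    have := (hwpos n).le; positivity
  -- facts about the points in the sum
  have hxJ : ∀ s : ℕ, (s:ℤ) < n.natAbs → (min n 0 + (s:ℤ)) ∈ J := by
    rcases hJ with rfl | rfl
    · intro s _; trivial
    · intro s hs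
      simp only [Set.mem_setOf_eq] at hn ⊢
      omega
  have hxabs : ∀ s : ℕ, (s:ℤ) < n.natAbs → |min n 0 + (s:ℤ)| ≤ |n| := by
    intro s hs
    rcases abs_cases n with ⟨h1, h2⟩ | ⟨h1, h2⟩ <;>
      rcases abs_cases (min n 0 + (s:ℤ)) with ⟨h3, h4⟩ | ⟨h3, h4⟩ <;> omega
  have hxabsR : ∀ x : ℤ, |x| ≤ |n| → |(x:ℝ)| ≤ |(n:ℝ)| := by
    intro x h
    rw [← Int.cast_abs, ← Int.cast_abs]
    exact_mod_cast h
  -- main sum estimate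
  have hmain : ∑ s ∈ Finset.range n.natAbs, ‖g (min n 0 + s)‖ ≤
      TwoM * (B + Kε) + (n.natAbs : ℝ) * Kε := by
    apply sum_avg_bound g (min n 0) n.natAbs M (B + Kε) Kε (by linarith) hKε0
    · intro s hs
      simp only [Finset.mem_range] at hs
      have hs' : (s:ℤ) < n.natAbs := by exact_mod_cast hs
      by_cases hc : R₂ ≤ |((min n 0 + (s:ℤ) : ℤ):ℝ)|
      · have := hR₂ _ (hxJ s hs') hc
        have h2 : ε₁ * (w (min n 0 + s) * (1 + |((min n 0 + (s:ℤ):ℤ):ℝ)|) ^ j) ≤ Kε := by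
          rw [hKεdef]
          have hw2 : w (min n 0 + (s:ℤ)) ≤ k * w n :=
            w_abs_le' w hwe k hmono (hxabs s hs')
          have hp2 : (1 + |((min n 0 + (s:ℤ):ℤ):ℝ)|) ^ j ≤ P := by
            rw [hPdef]
            apply pow_le_pow_left₀ (by positivity)
            have := hxabsR _ (hxabs s hs')
            linarith
          calc ε₁ * (w (min n 0 + s) * (1 + |((min n 0 + (s:ℤ):ℤ):ℝ)|) ^ j)
              ≤ ε₁ * ((k * w n) * P) := by
                apply mul_le_mul_of_nonneg_left _ hε₁.le
                apply mul_le_mul hw2 hp2 (by positivity) (mul_nonneg hk0.le (hwpos n).le)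
            _ = ε₁ * (k * (w n * P)) := by ring
        linarith
      · push_neg at hc
        have hxM : |min n 0 + (s:ℤ)| ≤ M := by
          have h1 : |((min n 0 + (s:ℤ):ℤ):ℝ)| < (M:ℝ) := lt_of_lt_of_le hc hMR
          have h2 : ((|min n 0 + (s:ℤ)| : ℤ):ℝ) < (M:ℝ) := by
            rwa [Int.cast_abs]
          exact_mod_cast h2.le
        linarith [hBbd _ hxM]
    · intro s hs hMs
      simp only [Finset.mem_range] at hs
      have hs' : (s:ℤ) < n.natAbs := by exact_mod_cast hs
      have hcR : R₂ ≤ |((min n 0 + (s:ℤ):ℤ):ℝ)| := by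
        have h1 : ((M:ℤ):ℝ) ≤ ((|min n 0 + (s:ℤ)|:ℤ):ℝ) := by exact_mod_cast hMs
        rw [Int.cast_abs] at h1
        linarith
      have := hR₂ _ (hxJ s hs') hcR
      have hw2 : w (min n 0 + (s:ℤ)) ≤ k * w n := w_abs_le' w hwe k hmono (hxabs s hs')
      have hp2 : (1 + |((min n 0 + (s:ℤ):ℤ):ℝ)|) ^ j ≤ P := by
        rw [hPdef]
        apply pow_le_pow_left₀ (by positivity)
        have := hxabsR _ (hxabs s hs')
        linarith
      calc ‖g (min n 0 + s)‖ ≤ ε₁ * (w (min n 0 + s) * (1 + |((min n 0 + (s:ℤ):ℤ):ℝ)|) ^ j) :=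
            this
        _ ≤ ε₁ * ((k * w n) * P) := by
            apply mul_le_mul_of_nonneg_left _ hε₁.le
            apply mul_le_mul hw2 hp2 (by positivity) (mul_nonneg hk0.le (hwpos n).le)
        _ = Kε := by rw [hKεdef]; ring
  have hnatabs : ((n.natAbs : ℕ) : ℝ) = |(n:ℝ)| := by
    calc ((n.natAbs : ℕ) : ℝ) = ((n.natAbs : ℤ) : ℝ) := (Int.cast_natCast _).symm
      _ = ((|n| : ℤ) : ℝ) := by rw [Int.abs_eq_natAbs]
      _ = |(n:ℝ)| := by rw [Int.cast_abs]
  calc ‖sumOp g n‖ ≤ ∑ s ∈ Finset.range n.natAbs, ‖g (min n 0 + s)‖ := norm_sumOp g n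
    _ ≤ TwoM * (B + Kε) + (n.natAbs : ℝ) * Kε := hmain
    _ = TwoM * B + TwoM * Kε + |(n:ℝ)| * Kε := by rw [hnatabs]; ring
    _ ≤ ε * (w n * (1 + |(n:ℝ)|) ^ (j+1)) := by
        -- three pieces
        have hwn := hwpos n
        have e1 : TwoM * B ≤ ε / 4 * (1 + |(n:ℝ)|) := by
          rw [div_le_iff₀ hε] at hn1
          nlinarith [hε, habs0, hTwoM0, hB0]
        have e1' : ε / 4 * (1 + |(n:ℝ)|) ≤ ε / 4 * (w n * (1 + |(n:ℝ)|) ^ (j+1)) := by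
          apply mul_le_mul_of_nonneg_left _ (by positivity : (0:ℝ) ≤ ε / 4)
          have h1 : 1 + |(n:ℝ)| ≤ (1 + |(n:ℝ)|)^(j+1) :=
            le_self_pow₀ (by linarith) (by omega)
          nlinarith [hw1 n]
        have e2 : TwoM * Kε ≤ ε / 4 * (w n * (1 + |(n:ℝ)|) ^ (j+1)) := by
          rw [div_le_iff₀ hε] at hn2
          rw [hKεdef, hPdef]
          have h1 : (1 + |(n:ℝ)|)^(j+1) = (1 + |(n:ℝ)|)^j * (1 + |(n:ℝ)|) := by ring
          rw [h1]
          have hpj : (0:ℝ) < (1 + |(n:ℝ)|)^j := by positivity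
          nlinarith [hwpos n, hpj, mul_pos hwn hpj]
        have e3 : |(n:ℝ)| * Kε ≤ ε / 2 * (w n * (1 + |(n:ℝ)|) ^ (j+1)) := by
          rw [hKεdef, hPdef, hε₁def]
          have h1 : (1 + |(n:ℝ)|)^(j+1) = (1 + |(n:ℝ)|)^j * (1 + |(n:ℝ)|) := by ring
          rw [h1]
          have heq : ε / (2*k) * k = ε / 2 := by field_simp
          have hpj : (0:ℝ) < (1 + |(n:ℝ)|)^j := by positivity
          calc |(n:ℝ)| * (ε / (2*k) * (k * (w n * (1 + |(n:ℝ)|)^j)))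
              = (ε / (2*k) * k) * (w n * (1 + |(n:ℝ)|)^j) * |(n:ℝ)| := by ring
            _ = ε / 2 * (w n * (1 + |(n:ℝ)|)^j) * |(n:ℝ)| := by rw [heq]
            _ ≤ ε / 2 * (w n * ((1 + |(n:ℝ)|)^j * (1 + |(n:ℝ)|))) := by
                nlinarith [hwpos n, hpj]
        linarith
end IterZ


section Rbasic
variable {X : Type*} [NormedAddCommGroup X] [NormedSpace ℝ X]

lemma intOp_neg (f : ℝ → X) : intOp (fun t => -f t) = fun t => -(intOp f t) := by
  funext t
  simp only [intOp, intervalIntegral.integral_neg]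

lemma intOp_comp_neg (f : ℝ → X) : intOp (fun s => f (-s)) = fun t => -(intOp f (-t)) := by
  funext t
  simp only [intOp]
  rw [intervalIntegral.integral_comp_neg f, neg_zero, ← intervalIntegral.integral_symm]

lemma intOp_iter_neg_fun (m : ℕ) : ∀ f : ℝ → X,
    intOp^[m] (fun t => -f t) = fun t => -(intOp^[m] f t) := by
  induction m with
  | zero => intro f; rfl
  | succ m ih =>
      intro f
      rw [Function.iterate_succ_apply, Function.iterate_succ_apply]
      rw [show intOp (fun t => -f t) = fun t => -(intOp f t) from intOp_neg f]
      exact ih (intOp f)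

lemma intOp_iter_comp_neg (m : ℕ) : ∀ f : ℝ → X, ∀ t : ℝ,
    ‖intOp^[m] (fun s => f (-s)) t‖ = ‖intOp^[m] f (-t)‖ := by
  induction m with
  | zero => intro f t; rfl
  | succ m ih =>
      intro f t
      rw [Function.iterate_succ_apply, intOp_comp_neg f]
      have h1 : (fun t => -intOp f (-t)) = (fun s => (fun x => -intOp f x) (-s)) := rfl
      rw [h1, ih (fun x => -intOp f x) t, intOp_iter_neg_fun m (intOp f), norm_neg,
        ← Function.iterate_succ_apply]

lemma contPrim {g : ℝ → X} (hg : ContinuousOn g (Set.Ici 0)) :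
    ContinuousOn (intOp g) (Set.Ici 0) := by
  intro x hx
  simp only [Set.mem_Ici] at hx
  have hint : IntervalIntegrable g MeasureTheory.volume (0 ⊓ 0) (0 ⊔ (x + 1)) := by
    apply ContinuousOn.intervalIntegrable
    apply hg.mono
    rw [Set.uIcc_of_le (by simp : (0:ℝ) ⊓ 0 ≤ 0 ⊔ (x + 1))]
    intro y hy
    simp only [Set.mem_Icc] at hy
    simp only [Set.mem_Ici]
    simpa using hy.1
  have h1 : ContinuousWithinAt (intOp g) (Set.Icc 0 (x+1)) x :=
    intervalIntegral.continuousWithinAt_primitive (by simp) hint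
  apply h1.mono_of_mem_nhdsWithin
  have : Set.Icc 0 (x+1) = Set.Ici 0 ∩ Set.Iic (x+1) := by
    ext y; simp [Set.mem_Icc, and_comm]
  rw [this]
  exact Filter.inter_mem self_mem_nhdsWithin
    (mem_nhdsWithin_of_mem_nhds (Iic_mem_nhds (by linarith)))

lemma w_ratio_bound_real (w : ℝ → ℝ) (hw1 : ∀ t, 1 ≤ w t)
    (hwr : ∀ h : ℝ, ∀ ε > 0, IsCompact {t : ℝ | ε ≤ |(w (t + h) - w t) / w t|})
    (u : ℝ) {ε : ℝ} (hε : 0 < ε) :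
    ∃ M : ℝ, 0 ≤ M ∧ ∀ σ : ℝ, M ≤ |σ| → |w (σ + u) - w σ| ≤ ε * w σ := by
  obtain ⟨r, hr⟩ := (Metric.isBounded_iff_subset_closedBall 0).1 (hwr u ε hε).isBounded
  refine ⟨max 0 (r + 1), le_max_left _ _, fun σ hσ => ?_⟩
  have hpos : 0 < w σ := lt_of_lt_of_le zero_lt_one (hw1 σ)
  have hnot : σ ∉ {t : ℝ | ε ≤ |(w (t + u) - w t) / w t|} := by
    intro hmem
    have h1 := hr hmem
    simp only [Metric.mem_closedBall, Real.dist_eq, sub_zero] at h1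
    have h2 : r + 1 ≤ |σ| := le_trans (le_max_right _ _) hσ
    linarith
  simp only [Set.mem_setOf_eq, not_le] at hnot
  have := hnot.le
  rw [abs_div, abs_of_pos hpos, div_le_iff₀ hpos] at this
  linarith
end Rbasic

section CoreR
variable {X : Type*} [NormedAddCommGroup X] [NormedSpace ℝ X] [CompleteSpace X]
open intervalIntegral MeasureTheory

set_option maxHeartbeats 2000000 in
lemma coreR (w : ℝ → ℝ) (hw1 : ∀ t, 1 ≤ w t) (hwsub : ∀ s t, w (s + t) ≤ w s * w t)
    (hwe : ∀ t, w (-t) = w t)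
    (hwr : ∀ h : ℝ, ∀ ε > 0, IsCompact {t : ℝ | ε ≤ |(w (t + h) - w t) / w t|})
    (k : ℝ) (hk : 1 ≤ k) (hmono : ∀ s t : ℝ, 0 ≤ s → s ≤ t → w s ≤ k * w t)
    (J : Set ℝ) (hJ : J = Set.univ ∨ J = Set.Ici (0:ℝ))
    (φ : ℝ → X) (hφc : ContinuousOn φ J)
    (C : ℝ) (hC : 0 ≤ C) (hφb : ∀ t ∈ J, ‖φ t‖ ≤ C * w t)
    (hM : MaakOn J (fun t => (w t)⁻¹ • φ t) 0)
    {ε : ℝ} (hε : 0 < ε) :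
    ∃ R : ℝ, 0 ≤ R ∧ ∀ t : ℝ, R ≤ t → ‖intOp φ t‖ ≤ ε * (w t * (1 + t)) := by
  have hwpos : ∀ x : ℝ, (0:ℝ) < w x := fun x => lt_of_lt_of_le zero_lt_one (hw1 x)
  have hk0 : (0:ℝ) < k := lt_of_lt_of_le zero_lt_one hk
  have hJ0 : ∀ x : ℝ, 0 ≤ x → x ∈ J := by
    rcases hJ with rfl | rfl
    · intro x _; trivial
    · intro x hx; exact hx
  have hJmem : ∀ u ∈ J, ∀ x : ℝ, min u 0 ≤ x → x ∈ J := by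
    rcases hJ with rfl | rfl
    · intro u _ x _; trivial
    · intro u hu x hx
      simp only [Set.mem_Ici] at hu ⊢
      rcases le_or_gt u 0 with h | h
      · rw [min_eq_left h] at hx; linarith
      · rw [min_eq_right h.le] at hx; exact hx
  have hadd : ∀ u ∈ J, ∀ σ ∈ J, u + σ ∈ J := by
    rcases hJ with rfl | rfl
    · intro u _ σ _; trivial
    · intro u hu σ hσ
      simp only [Set.mem_Ici] at hu hσ ⊢
      linarith
  have hUIcc : ∀ a ∈ J, ∀ b ∈ J, Set.uIcc a b ⊆ J := by
    rcases hJ with rfl | rfl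
    · intro a _ b _; exact fun x _ => trivial
    · intro a ha b hb x hx
      simp only [Set.mem_Ici] at ha hb ⊢
      rw [Set.uIcc_eq_union] at hx
      rcases hx with hx | hx <;> simp only [Set.mem_Icc] at hx <;> linarith [hx.1]
  have hInt : ∀ a ∈ J, ∀ b ∈ J, IntervalIntegrable φ volume a b :=
    fun a ha b hb => (hφc.mono (hUIcc a ha b hb)).intervalIntegrable
  -- ε₁ and Maak data
  set ε₁ : ℝ := ε / (2 * (1 + C) * k) with hε₁def
  have hε₁ : 0 < ε₁ := by positivity
  obtain ⟨F, hne, hFJ, havg⟩ := hM ε₁ hε₁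
  have hNpos : (0:ℝ) < F.card := by exact_mod_cast Finset.card_pos.2 hne
  have hNne : ((F.card : ℝ)) ≠ 0 := ne_of_gt hNpos
  set c : ℝ := (F.card : ℝ)⁻¹ with hcdef
  set W : ℝ := F.sup' hne w with hWdef
  have hW : ∀ u ∈ F, w u ≤ W := fun u hu => Finset.le_sup' w hu
  have hW1 : (1:ℝ) ≤ W := by
    obtain ⟨u, hu⟩ := hne
    exact le_trans (hw1 u) (hW u hu)
  set T₀ : ℝ := F.sup' hne (fun u => |u|) with hT₀def
  have hT₀ : ∀ u ∈ F, |u| ≤ T₀ := fun u hu => Finset.le_sup' _ hu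
  have hT₀0 : 0 ≤ T₀ := by
    obtain ⟨u, hu⟩ := hne
    exact le_trans (abs_nonneg u) (hT₀ u hu)
  have hex : ∀ u : ℝ, ∃ M : ℝ, 0 ≤ M ∧ ∀ σ : ℝ, M ≤ |σ| → |w (σ + u) - w σ| ≤ ε₁ * w σ :=
    fun u => w_ratio_bound_real w hw1 hwr u hε₁
  choose Mf hMf0 hMf using hex
  set s₀ : ℝ := max 1 (F.sup' hne Mf) with hs₀def
  have hs₀1 : (1:ℝ) ≤ s₀ := le_max_left _ _
  have hs₀0 : (0:ℝ) ≤ s₀ := by linarith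
  have hs₀F : ∀ u ∈ F, Mf u ≤ s₀ := fun u hu => le_trans (Finset.le_sup' Mf hu) (le_max_right _ _)
  -- averaged function bounds
  have hψb : ∀ σ ∈ J, ∀ u ∈ F, ‖φ (u + σ)‖ ≤ C * w (u + σ) :=
    fun σ hσ u hu => hφb _ (hadd u (hFJ hu) σ hσ)
  have havg1 : ∀ σ ∈ J, ‖c • ∑ u ∈ F, φ (u + σ)‖ ≤ C * W * w σ := by
    intro σ hσ
    apply inv_card_smul_norm_le F hne
    intro u hu
    calc ‖φ (u + σ)‖ ≤ C * w (u + σ) := hψb σ hσ u hu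
      _ ≤ C * (w u * w σ) := mul_le_mul_of_nonneg_left (hwsub u σ) hC
      _ ≤ C * (W * w σ) := by
          apply mul_le_mul_of_nonneg_left _ hC
          exact mul_le_mul_of_nonneg_right (hW u hu) (hwpos σ).le
      _ = C * W * w σ := by ring
  have havg2 : ∀ σ ∈ J, s₀ ≤ |σ| → ‖c • ∑ u ∈ F, φ (u + σ)‖ ≤ ε₁ * (1 + C) * w σ := by
    intro σ hσ hs
    apply avg_shift_bound w hw1 φ C F hne σ ε₁ hε₁.le
    · exact fun u hu => hψb σ hσ u hu
    · intro u hu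
      have := hMf u σ (le_trans (hs₀F u hu) hs)
      rwa [add_comm σ u] at this
    · have := havg σ hσ
      rw [sub_zero] at this
      exact this.le
  -- constants
  set B₁ : ℝ := C * W * (k * w s₀) with hB₁def
  have hB₁0 : 0 ≤ B₁ := by
    have h1 := (hwpos s₀).le
    have h2 : (0:ℝ) ≤ W := by linarith
    positivity
  set K₂ : ℝ := C * (k * w T₀) * T₀ with hK₂def
  have hK₂0 : 0 ≤ K₂ := by
    have h1 := (hwpos T₀).le
    positivity
  set K₃ : ℝ := C * (k * w T₀) * T₀ with hK₃def
  set Ktot : ℝ := B₁ * s₀ + K₂ + K₃ with hKtotdef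
  have hKtot0 : 0 ≤ Ktot := by
    rw [hKtotdef, hK₃def]
    nlinarith [hB₁0, hK₂0, hs₀0]
  refine ⟨max (max s₀ T₀) (2 * Ktot / ε), le_trans hs₀0 (le_trans (le_max_left s₀ T₀) (le_max_left _ _)), ?_⟩
  intro t ht
  have hts₀ : s₀ ≤ t := le_trans (le_max_left s₀ T₀) (le_trans (le_max_left _ _) ht)
  have htT₀ : T₀ ≤ t := le_trans (le_max_right s₀ T₀) (le_trans (le_max_left _ _) ht)
  have htK : 2 * Ktot / ε ≤ t := le_trans (le_max_right _ _) ht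
  have ht0 : 0 ≤ t := le_trans hs₀0 hts₀
  have htJ : t ∈ J := hJ0 t ht0
  -- integrability of shifted functions
  have hshiftcont : ∀ u ∈ F, ContinuousOn (fun s => φ (u + s)) (Set.Ici 0) := by
    intro u hu
    apply hφc.comp (continuous_const.add continuous_id).continuousOn
    intro s hs
    simp only [Set.mem_Ici] at hs
    exact hadd u (hFJ hu) s (hJ0 s hs)
  have hshiftint : ∀ u ∈ F, ∀ a b : ℝ, 0 ≤ a → 0 ≤ b →
      IntervalIntegrable (fun s => φ (u + s)) volume a b := by
    intro u hu a b ha hb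
    apply ((hshiftcont u hu).mono _).intervalIntegrable
    intro x hx
    rw [Set.uIcc_eq_union] at hx
    rcases hx with hx | hx <;> simp only [Set.mem_Icc] at hx <;> simp only [Set.mem_Ici] <;>
      linarith [hx.1]
  -- key identity
  have hid : ∀ u ∈ F, intOp φ t =
      (∫ s in (0:ℝ)..t, φ (u + s)) + intOp φ u - ∫ s in t..(t + u), φ s := by
    intro u hu
    have huJ : u ∈ J := hFJ hu
    have hutJ : u + t ∈ J := hadd u huJ t htJ
    have htuJ : t + u ∈ J := by rwa [add_comm t u]
    have e1 : (∫ s in (0:ℝ)..t, φ (u + s)) = ∫ s in u..(u + t), φ s := by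
      have := intervalIntegral.integral_comp_add_left (a := (0:ℝ)) (b := t) φ u
      simpa using this
    have e2 : (∫ s in (0:ℝ)..u, φ s) + (∫ s in u..(u + t), φ s) = ∫ s in (0:ℝ)..(u + t), φ s :=
      intervalIntegral.integral_add_adjacent_intervals
        (hInt 0 (hJ0 0 le_rfl) u huJ) (hInt u huJ _ hutJ)
    have e3 : (∫ s in (0:ℝ)..t, φ s) + (∫ s in t..(t + u), φ s) = ∫ s in (0:ℝ)..(t + u), φ s :=
      intervalIntegral.integral_add_adjacent_intervals
        (hInt 0 (hJ0 0 le_rfl) t htJ) (hInt t htJ _ htuJ)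
    have e4 : u + t = t + u := add_comm u t
    rw [intOp, intOp, e1, e4]
    rw [e4] at e2
    have e5 : (∫ s in u..(t + u), φ s) = (∫ s in (0:ℝ)..(t+u), φ s) - ∫ s in (0:ℝ)..u, φ s := by
      rw [← e2]; abel
    rw [e5, ← e3]
    abel
  -- representation
  have hrep : intOp φ t = c • ∑ u ∈ F,
      ((∫ s in (0:ℝ)..t, φ (u + s)) + intOp φ u - ∫ s in t..(t + u), φ s) := by
    have h1 : ∑ u ∈ F,
        ((∫ s in (0:ℝ)..t, φ (u + s)) + intOp φ u - ∫ s in t..(t + u), φ s) =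
          F.card • intOp φ t := by
      rw [Finset.sum_congr rfl (fun u hu => (hid u hu).symm), Finset.sum_const]
    rw [h1, hcdef, ← Nat.cast_smul_eq_nsmul ℝ, inv_smul_smul₀ hNne]
  rw [hrep, Finset.sum_sub_distrib, Finset.sum_add_distrib, smul_sub, smul_add]
  -- term A
  have hA : ‖c • ∑ u ∈ F, ∫ s in (0:ℝ)..t, φ (u + s)‖ ≤
      B₁ * s₀ + ε₁ * (1 + C) * (k * w t) * (1 + t) := by
    have hsum : (∫ s in (0:ℝ)..t, c • ∑ u ∈ F, φ (u + s)) =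
        c • ∑ u ∈ F, ∫ s in (0:ℝ)..t, φ (u + s) := by
      rw [← intervalIntegral.integral_finset_sum (fun u hu => hshiftint u hu 0 t le_rfl ht0),
        intervalIntegral.integral_smul]
    rw [← hsum]
    have hinth : ∀ a b : ℝ, 0 ≤ a → 0 ≤ b →
        IntervalIntegrable (fun s => c • ∑ u ∈ F, φ (u + s)) volume a b := by
      intro a b ha hb
      have h0 := (IntervalIntegrable.sum F (fun u hu => hshiftint u hu a b ha hb)).smul c
      have heqf : (fun s => c • ∑ u ∈ F, φ (u + s)) =
          c • ∑ i ∈ F, (fun s => φ (i + s)) := by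
        funext s
        simp [Finset.sum_apply]
      rw [heqf]
      exact h0
    have hsplit : (∫ s in (0:ℝ)..t, c • ∑ u ∈ F, φ (u + s)) =
        (∫ s in (0:ℝ)..s₀, c • ∑ u ∈ F, φ (u + s)) +
          ∫ s in s₀..t, c • ∑ u ∈ F, φ (u + s) := by
      rw [intervalIntegral.integral_add_adjacent_intervals (hinth 0 s₀ le_rfl hs₀0)
        (hinth s₀ t hs₀0 ht0)]
    rw [hsplit]
    have hA1 : ‖∫ s in (0:ℝ)..s₀, c • ∑ u ∈ F, φ (u + s)‖ ≤ B₁ * s₀ := by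
      have := intervalIntegral.norm_integral_le_of_norm_le_const
        (C := B₁) (f := fun s => c • ∑ u ∈ F, φ (u + s)) (a := (0:ℝ)) (b := s₀) ?_
      · rw [sub_zero, abs_of_nonneg hs₀0] at this
        exact this
      · intro x hx
        rw [Set.uIoc_of_le hs₀0] at hx
        obtain ⟨hx1, hx2⟩ := hx
        calc ‖c • ∑ u ∈ F, φ (u + x)‖ ≤ C * W * w x := havg1 x (hJ0 x hx1.le)
          _ ≤ C * W * (k * w s₀) := by
              apply mul_le_mul_of_nonneg_left (hmono x s₀ hx1.le hx2)
              have : (0:ℝ) ≤ W := by linarith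
              positivity
          _ = B₁ := by rw [hB₁def]
    have hA2 : ‖∫ s in s₀..t, c • ∑ u ∈ F, φ (u + s)‖ ≤ ε₁ * (1 + C) * (k * w t) * (1 + t) := by
      have hb := intervalIntegral.norm_integral_le_of_norm_le_const
        (C := ε₁ * (1 + C) * (k * w t)) (f := fun s => c • ∑ u ∈ F, φ (u + s))
        (a := s₀) (b := t) ?_
      · apply le_trans hb
        rw [abs_of_nonneg (by linarith : (0:ℝ) ≤ t - s₀)]
        apply mul_le_mul_of_nonneg_left (by linarith : t - s₀ ≤ 1 + t)
        have h1 : (0:ℝ) ≤ 1 + C := by linarith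
        have h2 := (hwpos t).le
        positivity
      · intro x hx
        rw [Set.uIoc_of_le hts₀] at hx
        obtain ⟨hx1, hx2⟩ := hx
        have hx0 : (0:ℝ) ≤ x := by linarith
        calc ‖c • ∑ u ∈ F, φ (u + x)‖ ≤ ε₁ * (1 + C) * w x := by
              apply havg2 x (hJ0 x hx0)
              rw [abs_of_nonneg hx0]; exact hx1.le
          _ ≤ ε₁ * (1 + C) * (k * w t) := by
              apply mul_le_mul_of_nonneg_left (hmono x t hx0 hx2)
              have h1 : (0:ℝ) ≤ 1 + C := by linarith
              positivity
    calc ‖(∫ s in (0:ℝ)..s₀, c • ∑ u ∈ F, φ (u + s)) +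
          ∫ s in s₀..t, c • ∑ u ∈ F, φ (u + s)‖
        ≤ ‖∫ s in (0:ℝ)..s₀, c • ∑ u ∈ F, φ (u + s)‖ +
          ‖∫ s in s₀..t, c • ∑ u ∈ F, φ (u + s)‖ := norm_add_le _ _
      _ ≤ B₁ * s₀ + ε₁ * (1 + C) * (k * w t) * (1 + t) := add_le_add hA1 hA2
  -- term B
  have hB : ‖c • ∑ u ∈ F, intOp φ u‖ ≤ K₂ := by
    apply inv_card_smul_norm_le F hne
    intro u hu
    have huJ : u ∈ F := hu
    have hb := intervalIntegral.norm_integral_le_of_norm_le_const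
      (C := C * (k * w T₀)) (f := φ) (a := (0:ℝ)) (b := u) ?_
    · rw [intOp]
      apply le_trans hb
      rw [hK₂def, sub_zero]
      apply mul_le_mul_of_nonneg_left (hT₀ u hu)
      have := (hwpos T₀).le
      positivity
    · intro x hx
      have hxJ : x ∈ J := by
        apply hJmem u (hFJ hu)
        rw [Set.uIoc_eq_union] at hx
        rcases hx with hx | hx <;> obtain ⟨h1, h2⟩ := hx
        · exact (lt_of_le_of_lt (min_le_right u 0) h1).le
        · exact (lt_of_le_of_lt (min_le_left u 0) h1).le
      have hxabs : |x| ≤ |T₀| := by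
        rw [abs_of_nonneg hT₀0]
        have h2 := hT₀ u hu
        rw [Set.uIoc_eq_union] at hx
        rcases hx with hx | hx <;> obtain ⟨h3, h4⟩ := hx <;>
          rcases abs_cases x with ⟨h5, h6⟩ | ⟨h5, h6⟩ <;>
          rcases abs_cases u with ⟨h7, h8⟩ | ⟨h7, h8⟩ <;> linarith
      calc ‖φ x‖ ≤ C * w x := hφb x hxJ
        _ ≤ C * (k * w T₀) := mul_le_mul_of_nonneg_left (w_abs_le' w hwe k hmono hxabs) hC
  -- term C
  have hCterm : ‖c • ∑ u ∈ F, ∫ s in t..(t + u), φ s‖ ≤ K₃ * w t := by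
    apply inv_card_smul_norm_le F hne
    intro u hu
    have hb := intervalIntegral.norm_integral_le_of_norm_le_const
      (C := C * (k * (w t * w T₀))) (f := φ) (a := t) (b := t + u) ?_
    · apply le_trans hb
      have h1 : |t + u - t| = |u| := by congr 1; ring
      rw [h1, hK₃def]
      have h2 := hT₀ u hu
      have h3 : (0:ℝ) ≤ C * (k * (w t * w T₀)) := by
        have := (hwpos T₀).le; have := (hwpos t).le
        positivity
      calc C * (k * (w t * w T₀)) * |u| ≤ C * (k * (w t * w T₀)) * T₀ :=
            mul_le_mul_of_nonneg_left h2 h3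
        _ = C * (k * w T₀) * T₀ * w t := by ring
    · intro x hx
      have hxmem : min t (t + u) < x ∧ x ≤ max t (t + u) := by
        rw [Set.uIoc_eq_union] at hx
        rcases hx with hx | hx <;> obtain ⟨h1, h2⟩ := hx
        · exact ⟨lt_of_le_of_lt (min_le_left _ _) h1,
            le_trans h2 (le_max_right _ _)⟩
        · exact ⟨lt_of_le_of_lt (min_le_right _ _) h1,
            le_trans h2 (le_max_left _ _)⟩
      have hu2 := hT₀ u hu
      have habsu : -T₀ ≤ u ∧ u ≤ T₀ := abs_le.1 hu2
      have hx0 : 0 ≤ x := by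
        rcases min_cases t (t + u) with ⟨h1, _⟩ | ⟨h1, _⟩ <;> linarith [hxmem.1]
      have hxJ : x ∈ J := hJ0 x hx0
      have hxabs : |x| ≤ |t + T₀| := by
        rw [abs_of_nonneg (by linarith : (0:ℝ) ≤ t + T₀), abs_of_nonneg hx0]
        rcases max_cases t (t + u) with ⟨h1, _⟩ | ⟨h1, _⟩ <;> linarith [hxmem.2]
      calc ‖φ x‖ ≤ C * w x := hφb x hxJ
        _ ≤ C * (k * w (t + T₀)) := mul_le_mul_of_nonneg_left (w_abs_le' w hwe k hmono hxabs) hC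
        _ ≤ C * (k * (w t * w T₀)) := by
            apply mul_le_mul_of_nonneg_left _ hC
            exact mul_le_mul_of_nonneg_left (hwsub t T₀) hk0.le
  -- combine
  have hwt1 : (1:ℝ) ≤ w t := hw1 t
  have heps : ε₁ * (1 + C) * k = ε / 2 := by
    rw [hε₁def]; field_simp
  have hKt : Ktot ≤ ε / 2 * (1 + t) := by
    rw [div_le_iff₀ hε] at htK
    nlinarith
  calc ‖c • (∑ u ∈ F, ∫ s in (0:ℝ)..t, φ (u + s)) + c • (∑ u ∈ F, intOp φ u) -
        c • (∑ u ∈ F, ∫ s in t..(t + u), φ s)‖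
      ≤ ‖c • (∑ u ∈ F, ∫ s in (0:ℝ)..t, φ (u + s)) + c • (∑ u ∈ F, intOp φ u)‖ +
        ‖c • (∑ u ∈ F, ∫ s in t..(t + u), φ s)‖ := norm_sub_le _ _
    _ ≤ (‖c • (∑ u ∈ F, ∫ s in (0:ℝ)..t, φ (u + s))‖ + ‖c • (∑ u ∈ F, intOp φ u)‖) +
        ‖c • (∑ u ∈ F, ∫ s in t..(t + u), φ s)‖ := by
        apply add_le_add_left (norm_add_le _ _)
    _ ≤ (B₁ * s₀ + ε₁ * (1 + C) * (k * w t) * (1 + t) + K₂) + K₃ * w t :=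
        add_le_add (add_le_add hA hB) hCterm
    _ ≤ Ktot * w t + ε / 2 * (w t * (1 + t)) := by
        have h1 : ε₁ * (1 + C) * (k * w t) * (1 + t) = (ε₁ * (1 + C) * k) * (w t * (1 + t)) := by
          ring
        rw [h1, heps]
        have h2 : B₁ * s₀ + K₂ ≤ (B₁ * s₀ + K₂) * w t := by
          apply le_mul_of_one_le_right _ hwt1
          nlinarith [hB₁0, hK₂0, hs₀0]
        have h3 : Ktot * w t = (B₁ * s₀ + K₂) * w t + K₃ * w t := by
          rw [hKtotdef]; ring
        linarith
    _ ≤ ε / 2 * (w t * (1 + t)) + ε / 2 * (w t * (1 + t)) := by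
        have h4 : Ktot * w t ≤ (ε / 2 * (1 + t)) * w t :=
          mul_le_mul_of_nonneg_right hKt (hwpos t).le
        have h5 : (ε / 2 * (1 + t)) * w t = ε / 2 * (w t * (1 + t)) := by ring
        linarith
    _ = ε * (w t * (1 + t)) := by ring
end CoreR

section IterR
variable {X : Type*} [NormedAddCommGroup X] [NormedSpace ℝ X] [CompleteSpace X]
open intervalIntegral MeasureTheory

set_option maxHeartbeats 1000000 in
lemma iterR (w : ℝ → ℝ) (hw1 : ∀ t, 1 ≤ w t)
    (k : ℝ) (hk : 1 ≤ k) (hmono : ∀ s t : ℝ, 0 ≤ s → s ≤ t → w s ≤ k * w t)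
    (g : ℝ → X) (hg : ContinuousOn g (Set.Ici 0)) (j : ℕ)
    (hdec : ∀ ε > 0, ∃ R : ℝ, 0 ≤ R ∧ ∀ t, R ≤ t → ‖g t‖ ≤ ε * (w t * (1 + t) ^ j)) :
    ∀ ε > 0, ∃ R : ℝ, 0 ≤ R ∧ ∀ t, R ≤ t → ‖intOp g t‖ ≤ ε * (w t * (1 + t) ^ (j+1)) := by
  intro ε hε
  have hwpos : ∀ x : ℝ, (0:ℝ) < w x := fun x => lt_of_lt_of_le zero_lt_one (hw1 x)
  have hk0 : (0:ℝ) < k := lt_of_lt_of_le zero_lt_one hk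
  set ε₁ : ℝ := ε / (2 * k) with hε₁def
  have hε₁ : 0 < ε₁ := by positivity
  obtain ⟨R₁, hR₁0, hR₁⟩ := hdec ε₁ hε₁
  obtain ⟨B₀, hB₀⟩ := (isCompact_Icc (a := (0:ℝ)) (b := R₁)).exists_bound_of_continuousOn
    (hg.mono (fun x hx => by simp only [Set.mem_Icc] at hx; exact hx.1))
  set B : ℝ := max B₀ 0 with hBdef
  have hB0 : 0 ≤ B := le_max_right _ _
  have hBbd : ∀ x ∈ Set.Icc (0:ℝ) R₁, ‖g x‖ ≤ B :=
    fun x hx => le_trans (hB₀ x hx) (le_max_left _ _)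
  have hgint : ∀ a b : ℝ, 0 ≤ a → 0 ≤ b → IntervalIntegrable g volume a b := by
    intro a b ha hb
    apply (hg.mono _).intervalIntegrable
    intro x hx
    rw [Set.uIcc_eq_union] at hx
    rcases hx with hx | hx <;> simp only [Set.mem_Icc] at hx <;>
      simp only [Set.mem_Ici] <;> linarith [hx.1]
  refine ⟨max R₁ (2 * (B * R₁) / ε), le_trans hR₁0 (le_max_left _ _), ?_⟩
  intro t ht
  have htR₁ : R₁ ≤ t := le_trans (le_max_left _ _) ht
  have ht0 : 0 ≤ t := le_trans hR₁0 htR₁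
  have htB : 2 * (B * R₁) / ε ≤ t := le_trans (le_max_right _ _) ht
  have hsplit : intOp g t = (∫ s in (0:ℝ)..R₁, g s) + ∫ s in R₁..t, g s := by
    rw [intOp, intervalIntegral.integral_add_adjacent_intervals
      (hgint 0 R₁ le_rfl hR₁0) (hgint R₁ t hR₁0 ht0)]
  rw [hsplit]
  have h1 : ‖∫ s in (0:ℝ)..R₁, g s‖ ≤ B * R₁ := by
    have hb := intervalIntegral.norm_integral_le_of_norm_le_const (C := B) (f := g)
      (a := (0:ℝ)) (b := R₁) ?_
    · rwa [sub_zero, abs_of_nonneg hR₁0] at hb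
    · intro x hx
      rw [Set.uIoc_of_le hR₁0] at hx
      exact hBbd x ⟨hx.1.le, hx.2⟩
  have h2 : ‖∫ s in R₁..t, g s‖ ≤ ε / 2 * (w t * (1 + t) ^ (j+1)) := by
    have hb := intervalIntegral.norm_integral_le_of_norm_le_const
      (C := ε₁ * (k * (w t * (1 + t) ^ j))) (f := g) (a := R₁) (b := t) ?_
    · apply le_trans hb
      rw [abs_of_nonneg (by linarith : (0:ℝ) ≤ t - R₁)]
      have e1 : (1 + t) ^ (j+1) = (1 + t)^j * (1 + t) := by ring
      rw [e1]
      have hpj : (0:ℝ) < (1 + t)^j := by positivity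
      have heq : ε₁ * k = ε / 2 := by rw [hε₁def]; field_simp
      calc ε₁ * (k * (w t * (1 + t) ^ j)) * (t - R₁)
          = (ε₁ * k) * (w t * (1 + t)^j) * (t - R₁) := by ring
        _ = ε / 2 * (w t * (1 + t)^j) * (t - R₁) := by rw [heq]
        _ ≤ ε / 2 * (w t * (1 + t)^j) * (1 + t) := by
            apply mul_le_mul_of_nonneg_left (by linarith)
            have := (hwpos t).le
            positivity
        _ = ε / 2 * (w t * ((1 + t)^j * (1 + t))) := by ring
    · intro x hx
      rw [Set.uIoc_of_le htR₁] at hx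
      obtain ⟨hx1, hx2⟩ := hx
      have hx0 : (0:ℝ) ≤ x := le_trans hR₁0 hx1.le
      calc ‖g x‖ ≤ ε₁ * (w x * (1 + x) ^ j) := hR₁ x hx1.le
        _ ≤ ε₁ * (k * (w t * (1 + t) ^ j)) := by
            apply mul_le_mul_of_nonneg_left _ hε₁.le
            have hw2 : w x ≤ k * w t := hmono x t hx0 hx2
            have hp2 : (1 + x)^j ≤ (1 + t)^j := by
              apply pow_le_pow_left₀ (by linarith) (by linarith)
            calc w x * (1 + x)^j ≤ (k * w t) * (1 + t)^j := by
                  apply mul_le_mul hw2 hp2 (by positivity)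
                  exact mul_nonneg hk0.le (hwpos t).le
              _ = k * (w t * (1 + t)^j) := by ring
  have hB1 : B * R₁ ≤ ε / 2 * (w t * (1 + t) ^ (j+1)) := by
    rw [div_le_iff₀ hε] at htB
    have e2 : B * R₁ ≤ ε / 2 * t := by linarith
    have e3 : t ≤ (1+t)^(j+1) := by
      calc t ≤ 1 + t := by linarith
        _ ≤ (1+t)^(j+1) := le_self_pow₀ (by linarith) (by omega)
    calc B * R₁ ≤ ε / 2 * t := e2
      _ ≤ ε / 2 * (1+t)^(j+1) := by
          apply mul_le_mul_of_nonneg_left e3 (by positivity)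
      _ ≤ ε / 2 * (w t * (1 + t)^(j+1)) := by
          apply mul_le_mul_of_nonneg_left _ (by positivity)
          have h4 : (0:ℝ) < (1+t)^(j+1) := by positivity
          nlinarith [hw1 t]
  calc ‖(∫ s in (0:ℝ)..R₁, g s) + ∫ s in R₁..t, g s‖
      ≤ ‖∫ s in (0:ℝ)..R₁, g s‖ + ‖∫ s in R₁..t, g s‖ := norm_add_le _ _
    _ ≤ ε / 2 * (w t * (1 + t) ^ (j+1)) + ε / 2 * (w t * (1 + t) ^ (j+1)) := by
        have := le_trans h1 hB1
        linarith
    _ = ε * (w t * (1 + t) ^ (j+1)) := by ring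
end IterR

section Chains
variable {X : Type*} [NormedAddCommGroup X] [NormedSpace ℝ X] [CompleteSpace X]

lemma chainR (w : ℝ → ℝ) (hw1 : ∀ t, 1 ≤ w t) (hwsub : ∀ s t, w (s + t) ≤ w s * w t)
    (hwe : ∀ t, w (-t) = w t)
    (hwr : ∀ h : ℝ, ∀ ε > 0, IsCompact {t : ℝ | ε ≤ |(w (t + h) - w t) / w t|})
    (k : ℝ) (hk : 1 ≤ k) (hmono : ∀ s t : ℝ, 0 ≤ s → s ≤ t → w s ≤ k * w t)
    (J : Set ℝ) (hJ : J = Set.univ ∨ J = Set.Ici (0:ℝ))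
    (φ : ℝ → X) (hφc : ContinuousOn φ J)
    (C : ℝ) (hC : 0 ≤ C) (hφb : ∀ t ∈ J, ‖φ t‖ ≤ C * w t)
    (hM : MaakOn J (fun t => (w t)⁻¹ • φ t) 0) :
    ∀ j : ℕ, ∀ ε > 0, ∃ R : ℝ, 0 ≤ R ∧ ∀ t, R ≤ t →
      ‖intOp^[j+1] φ t‖ ≤ ε * (w t * (1 + t) ^ (j+1)) := by
  have hIci : Set.Ici (0:ℝ) ⊆ J := by
    rcases hJ with rfl | rfl
    · exact fun x _ => trivial
    · exact subset_rfl
  have key : ∀ j : ℕ, (∀ ε > 0, ∃ R : ℝ, 0 ≤ R ∧ ∀ t, R ≤ t →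
      ‖intOp^[j+1] φ t‖ ≤ ε * (w t * (1 + t) ^ (j+1))) ∧
      ContinuousOn (intOp^[j+1] φ) (Set.Ici 0) := by
    intro j
    induction j with
    | zero =>
        constructor
        · intro ε hε
          obtain ⟨R, hR0, hR⟩ := coreR w hw1 hwsub hwe hwr k hk hmono J hJ φ hφc C hC hφb hM hε
          refine ⟨R, hR0, fun t ht => ?_⟩
          have := hR t ht
          simpa [Function.iterate_one, pow_one] using this
        · have h1 : intOp^[1] φ = intOp φ := rfl
          rw [h1]
          exact contPrim (hφc.mono hIci)
    | succ j ih =>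
        constructor
        · intro ε hε
          obtain ⟨R, hR0, hR⟩ := iterR w hw1 k hk hmono (intOp^[j+1] φ) ih.2 (j+1) ih.1 ε hε
          refine ⟨R, hR0, fun t ht => ?_⟩
          have := hR t ht
          rwa [← Function.iterate_succ_apply' intOp (j+1) φ] at this
        · have := contPrim ih.2
          rwa [← Function.iterate_succ_apply' intOp (j+1) φ] at this
  exact fun j => (key j).1

lemma maak_reflect (w : ℝ → ℝ) (hwe : ∀ t, w (-t) = w t) (φ : ℝ → X)
    (hM : MaakOn (Set.univ : Set ℝ) (fun t => (w t)⁻¹ • φ t) 0) :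
    MaakOn (Set.univ : Set ℝ) (fun t => (w t)⁻¹ • φ (-t)) 0 := by
  intro ε hε
  obtain ⟨F, hne, _, h⟩ := hM ε hε
  refine ⟨F.image (fun u => -u), hne.image _, by simp, ?_⟩
  intro s _
  rw [Finset.card_image_of_injective _ neg_injective]
  have hsum : ∑ v ∈ F.image (fun u => -u), (w (v + s))⁻¹ • φ (-(v + s)) =
      ∑ u ∈ F, (w (u + -s))⁻¹ • φ (u + -s) := by
    rw [Finset.sum_image (fun u _ u' _ h => neg_injective h)]
    apply Finset.sum_congr rfl
    intro u _
    have e1 : -(-u + s) = u + -s := by ring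
    have e2 : w (-u + s) = w (u + -s) := by
      rw [← hwe (u + -s)]
      congr 1
      ring
    rw [e1, e2]
  simp only [hsum]
  exact h (-s) trivial

lemma chainZ (w : ℤ → ℝ) (hw1 : ∀ t, 1 ≤ w t) (hwsub : ∀ s t, w (s + t) ≤ w s * w t)
    (hwe : ∀ t, w (-t) = w t)
    (hwr : ∀ h : ℤ, ∀ ε > 0, IsCompact {t : ℤ | ε ≤ |(w (t + h) - w t) / w t|})
    (k : ℝ) (hk : 1 ≤ k) (hmono : ∀ s t : ℤ, 0 ≤ s → s ≤ t → w s ≤ k * w t)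
    (J : Set ℤ) (hJ : J = Set.univ ∨ J = {n : ℤ | 0 ≤ n})
    (φ : ℤ → X) (C : ℝ) (hC : 0 ≤ C) (hφb : ∀ t ∈ J, ‖φ t‖ ≤ C * w t)
    (hM : MaakOn J (fun t => (w t)⁻¹ • φ t) 0) :
    ∀ j : ℕ, ∀ ε > 0, ∃ R : ℝ, ∀ n ∈ J, R ≤ |(n:ℝ)| →
      ‖sumOp^[j+1] φ n‖ ≤ ε * (w n * (1 + |(n:ℝ)|) ^ (j+1)) := by
  intro j
  induction j with
  | zero =>
      intro ε hε
      obtain ⟨R, hR⟩ := coreZ w hw1 hwsub hwe hwr k hk hmono J hJ φ C hC hφb hM hε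
      refine ⟨R, fun n hn h => ?_⟩
      have := hR n hn h
      simpa [Function.iterate_one, pow_one] using this
  | succ j ih =>
      intro ε hε
      obtain ⟨R, hR⟩ := iterZ w hw1 hwe k hk hmono J hJ (sumOp^[j+1] φ) (j+1) ih ε hε
      refine ⟨R, fun n hn h => ?_⟩
      have := hR n hn h
      rwa [← Function.iterate_succ_apply' sumOp (j+1) φ] at this
end Chains

/-- Theorem 4.14: if `φ ∈ E_w^0(J,X)` for a standard weight `w` with
`w(s) ≤ k·w(t)` for `0 ≤ s ≤ t`, then `P^mφ ∈ C_{w·w_m,0}(J,X)` (case `J ⊆ ℝ`),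
respectively `S^mφ ∈ C_{w·w_m,0}(J,X)` (case `J ⊆ ℤ`), where `w_m(t) = (1+|t|)^m`. -/
theorem iterated_primitive_sum_decay
    {X : Type*} [NormedAddCommGroup X] [NormedSpace ℂ X] [CompleteSpace X]
    (m : ℕ) (hm : 1 ≤ m) :
    (∀ w : ℝ → ℝ, IsStdWeight w →
      ∀ k : ℝ, 0 < k → (∀ s t : ℝ, 0 ≤ s → s ≤ t → w s ≤ k * w t) →
      ∀ J : Set ℝ, (J = Set.univ ∨ J = Set.Ici (0 : ℝ)) →
      ∀ φ : ℝ → X, ContinuousOn φ J → (∃ C : ℝ, ∀ t ∈ J, ‖φ t‖ ≤ C * w t) →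
      MaakOn J (fun t => (w t)⁻¹ • φ t) (0 : X) →
      ∀ ε > 0, ∃ R : ℝ, ∀ t ∈ J, R ≤ |t| →
        ‖(intOp)^[m] φ t‖ ≤ ε * (w t * (1 + |t|) ^ m)) ∧
    (∀ w : ℤ → ℝ, IsStdWeight w →
      ∀ k : ℝ, 0 < k → (∀ s t : ℤ, 0 ≤ s → s ≤ t → w s ≤ k * w t) →
      ∀ J : Set ℤ, (J = Set.univ ∨ J = {n : ℤ | 0 ≤ n}) →
      ∀ φ : ℤ → X, (∃ C : ℝ, ∀ t ∈ J, ‖φ t‖ ≤ C * w t) →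
      MaakOn J (fun t => (w t)⁻¹ • φ t) (0 : X) →
      ∀ ε > 0, ∃ R : ℝ, ∀ t ∈ J, R ≤ |(t : ℝ)| →
        ‖(sumOp)^[m] φ t‖ ≤ ε * (w t * (1 + |(t : ℝ)|) ^ m)) := by
  obtain ⟨j, rfl⟩ : ∃ j, m = j + 1 := ⟨m - 1, by omega⟩
  constructor
  · -- real case
    intro w hsw k₀ hk₀ hmono₀ J hJ φ hφc hCex hM ε hε
    obtain ⟨hwc, hw1, hwsub, hwe, _, _, hwr, _⟩ := hsw
    obtain ⟨C₀, hφb₀⟩ := hCex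
    have hwpos : ∀ x : ℝ, (0:ℝ) < w x := fun x => lt_of_lt_of_le zero_lt_one (hw1 x)
    set k : ℝ := max k₀ 1 with hkdef
    have hk : (1:ℝ) ≤ k := le_max_right _ _
    have hmono : ∀ s t : ℝ, 0 ≤ s → s ≤ t → w s ≤ k * w t := fun s t hs hst =>
      le_trans (hmono₀ s t hs hst)
        (mul_le_mul_of_nonneg_right (le_max_left _ _) (hwpos t).le)
    set C : ℝ := max C₀ 0 with hCdef
    have hC : (0:ℝ) ≤ C := le_max_right _ _
    have hφb : ∀ t ∈ J, ‖φ t‖ ≤ C * w t := fun t ht =>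
      le_trans (hφb₀ t ht) (mul_le_mul_of_nonneg_right (le_max_left _ _) (hwpos t).le)
    obtain ⟨Rp, hRp0, hRp⟩ :=
      chainR w hw1 hwsub hwe hwr k hk hmono J hJ φ hφc C hC hφb hM j ε hε
    rcases hJ with rfl | rfl
    · -- J = univ
      have hMneg := maak_reflect w hwe φ hM
      have hφcneg : ContinuousOn (fun s => φ (-s)) (Set.univ : Set ℝ) :=
        hφc.comp continuous_neg.continuousOn (fun x _ => trivial)
      have hφbneg : ∀ t ∈ (Set.univ : Set ℝ), ‖(fun s => φ (-s)) t‖ ≤ C * w t := by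
        intro t _
        have := hφb (-t) trivial
        rwa [hwe t] at this
      obtain ⟨Rn, hRn0, hRn⟩ := chainR w hw1 hwsub hwe hwr k hk hmono Set.univ (Or.inl rfl)
        (fun s => φ (-s)) hφcneg C hC hφbneg hMneg j ε hε
      refine ⟨max Rp Rn, ?_⟩
      intro t _ hRt
      rcases le_or_gt 0 t with h0 | h0
      · rw [abs_of_nonneg h0] at hRt ⊢
        exact hRp t (le_trans (le_max_left _ _) hRt)
      · rw [abs_of_neg h0] at hRt ⊢
        have h2 := hRn (-t) (le_trans (le_max_right _ _) hRt)
        have h3 : ‖intOp^[j+1] (fun s => φ (-s)) (-t)‖ = ‖intOp^[j+1] φ t‖ := by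
          have := intOp_iter_comp_neg (j+1) φ (-t)
          rwa [neg_neg] at this
        rw [h3, hwe t] at h2
        exact h2
    · -- J = Ici 0
      refine ⟨Rp, ?_⟩
      intro t ht hRt
      have ht0 : (0:ℝ) ≤ t := ht
      rw [abs_of_nonneg ht0] at hRt ⊢
      exact hRp t hRt
  · -- integer case
    intro w hsw k₀ hk₀ hmono₀ J hJ φ hCex hM ε hε
    obtain ⟨hwc, hw1, hwsub, hwe, _, _, hwr, _⟩ := hsw
    obtain ⟨C₀, hφb₀⟩ := hCex
    have hwpos : ∀ x : ℤ, (0:ℝ) < w x := fun x => lt_of_lt_of_le zero_lt_one (hw1 x)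
    set k : ℝ := max k₀ 1 with hkdef
    have hk : (1:ℝ) ≤ k := le_max_right _ _
    have hmono : ∀ s t : ℤ, 0 ≤ s → s ≤ t → w s ≤ k * w t := fun s t hs hst =>
      le_trans (hmono₀ s t hs hst)
        (mul_le_mul_of_nonneg_right (le_max_left _ _) (hwpos t).le)
    set C : ℝ := max C₀ 0 with hCdef
    have hC : (0:ℝ) ≤ C := le_max_right _ _
    have hφb : ∀ t ∈ J, ‖φ t‖ ≤ C * w t := fun t ht =>
      le_trans (hφb₀ t ht) (mul_le_mul_of_nonneg_right (le_max_left _ _) (hwpos t).le)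
    exact chainZ w hw1 hwsub hwe hwr k hk hmono J hJ φ C hC hφb hM j ε hε
end

section
/- Let m ≥ 1 and N ≥ 1 be natural numbers and k ≥ 0 an integer, and for 0 ≤ j ≤ N set a(m,j) = (−1)^j · binom(N,j) · binom(m−1+j, j) · j!. Then Σ_{j=0}^N a(m,j)/(j+k)! equals: binom(N+k−m, N) · N!/(N+k)! if m ≤ k; 0 if k+1 ≤ m ≤ k+N; and (−1)^N · binom(m−k−1, N) · N!/(N+k)! if m > k+N. -/
lemma key_nat (m j : ℕ) (hm : 1 ≤ m) :
    (m + j).choose (j + 1) * (j + 1).factorial = m * ((m + j).choose j * j.factorial) := by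
  obtain ⟨m', rfl⟩ := Nat.exists_eq_add_of_le hm
  apply Nat.eq_of_mul_eq_mul_right (Nat.factorial_pos m')
  have h1 : (1 + m' + j).choose (j + 1) * (j + 1).factorial * m'.factorial
      = (1 + m' + j).factorial := by
    have := Nat.choose_mul_factorial_mul_factorial (show j + 1 ≤ 1 + m' + j by omega)
    rwa [show 1 + m' + j - (j + 1) = m' from by omega] at this
  have h2 : (1 + m' + j).choose j * j.factorial * (m' + 1).factorial
      = (1 + m' + j).factorial := by
    have := Nat.choose_mul_factorial_mul_factorial (show j ≤ 1 + m' + j by omega)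
    rwa [show 1 + m' + j - j = m' + 1 from by omega] at this
  rw [h1]
  symm
  calc (1 + m') * ((1 + m' + j).choose j * j.factorial) * m'.factorial
      = (1 + m' + j).choose j * j.factorial * ((m' + 1) * m'.factorial) := by ring
    _ = (1 + m' + j).choose j * j.factorial * (m' + 1).factorial := by
        rw [Nat.factorial_succ]
    _ = (1 + m' + j).factorial := h2

noncomputable def Tm (m k n j : ℕ) : ℚ :=
  ((-1 : ℚ) ^ j * (n.choose j) * ((m - 1 + j).choose j) * (j.factorial)) / ((j + k).factorial)

lemma Trec (m k N j : ℕ) (hm : 1 ≤ m) :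
    Tm m k (N + 1) (j + 1) = Tm m k N (j + 1) - m * Tm (m + 1) (k + 1) N j := by
  have hkq : ((m + j).choose (j + 1) : ℚ) * (j + 1).factorial
      = m * ((m + j).choose j * j.factorial) := by exact_mod_cast key_nat m j hm
  have e1 : m - 1 + (j + 1) = m + j := by omega
  have e2 : m + 1 - 1 = m := rfl
  have e3 : j + (k + 1) = j + 1 + k := by omega
  simp only [Tm, e1, e2, e3, Nat.choose_succ_succ]
  push_cast
  linear_combination ((-1 : ℚ) ^ (j + 1) * (N.choose j : ℚ) / ((j + 1 + k).factorial)) * hkq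

lemma Srec (m k N : ℕ) (hm : 1 ≤ m) :
    ∑ j ∈ Finset.range (N + 2), Tm m k (N + 1) j
      = ∑ j ∈ Finset.range (N + 1), Tm m k N j
        - m * ∑ j ∈ Finset.range (N + 1), Tm (m + 1) (k + 1) N j := by
  rw [Finset.sum_range_succ' (fun j => Tm m k (N + 1) j) (N + 1)]
  rw [Finset.sum_congr rfl (fun j _ => Trec m k N j hm)]
  rw [Finset.sum_sub_distrib, ← Finset.mul_sum]
  have h0 : Tm m k (N + 1) 0 = Tm m k N 0 := by simp [Tm]
  have h1 : ∑ j ∈ Finset.range (N + 1), Tm m k N (j + 1) + Tm m k N 0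
      = ∑ j ∈ Finset.range (N + 2), Tm m k N j :=
    (Finset.sum_range_succ' (fun j => Tm m k N j) (N + 1)).symm
  have h2 : ∑ j ∈ Finset.range (N + 2), Tm m k N j
      = ∑ j ∈ Finset.range (N + 1), Tm m k N j + Tm m k N (N + 1) :=
    Finset.sum_range_succ _ _
  have h3 : Tm m k N (N + 1) = 0 := by
    simp [Tm, Nat.choose_eq_zero_of_lt (Nat.lt_succ_self N)]
  rw [h0]
  linear_combination h1 + h2 + h3

noncomputable def Ff (n m k : ℕ) : ℚ :=
  if m ≤ k then ((n + k - m).choose n : ℚ) * n.factorial / (n + k).factorial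
  else if m ≤ k + n then 0
  else (-1 : ℚ) ^ n * ((m - k - 1).choose n : ℚ) * n.factorial / (n + k).factorial

lemma Frec (m k N : ℕ) (hm : 1 ≤ m) :
    Ff (N + 1) m k = Ff N m k - m * Ff N (m + 1) (k + 1) := by
  have fne : ∀ a : ℕ, ((a.factorial : ℚ)) ≠ 0 := fun a => by
    exact_mod_cast a.factorial_ne_zero
  rcases le_or_gt m k with h1 | h1
  · -- m ≤ k
    obtain ⟨d, rfl⟩ := Nat.exists_eq_add_of_le h1
    simp only [Ff, if_pos h1, if_pos (show m + 1 ≤ m + d + 1 by omega)]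
    have e1 : N + 1 + (m + d) - m = N + 1 + d := by omega
    have e2 : N + (m + d) - m = N + d := by omega
    have e3 : N + (m + d + 1) - (m + 1) = N + d := by omega
    rw [e1, e2, e3]
    have hc : ((N + d + 1 : ℕ) : ℚ) * ((N + d).choose N : ℚ)
        = ((N + d + 1).choose (N + 1) : ℚ) * (N + 1) := by
      exact_mod_cast Nat.add_one_mul_choose_eq (N + d) N
    rw [show N + 1 + (m + d) = N + (m + d + 1) by omega,
      show (N + 1 + d) = (N + d + 1) by omega]
    have hx : ((N : ℚ) + m + d + 1) ≠ 0 := by positivity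
    have fW : ((N + (m + d + 1)).factorial : ℚ)
        = ((N + (m + d)).factorial : ℚ) * ((N : ℚ) + m + d + 1) := by
      rw [show N + (m + d + 1) = N + (m + d) + 1 by omega, Nat.factorial_succ]
      push_cast; ring
    have hB : ((N + d).choose N : ℚ) * N.factorial / ((N + (m + d)).factorial : ℚ)
        = ((N + d).choose N : ℚ) * N.factorial * ((N : ℚ) + m + d + 1)
            / ((N + (m + d + 1)).factorial : ℚ) := by
      rw [fW]; exact (mul_div_mul_right _ _ hx).symm
    rw [hB, ← mul_div_assoc, ← sub_div]
    congr 1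
    rw [Nat.factorial_succ]
    push_cast at hc ⊢
    linear_combination (-(N.factorial : ℚ)) * hc
  · rcases le_or_gt m (k + N + 1) with h2 | h2
    · rcases le_or_gt m (k + N) with h3 | h3
      · -- middle-middle: all zero
        simp only [Ff, if_neg (by omega : ¬ m ≤ k), if_pos (show m ≤ k + (N + 1) by omega),
          if_pos h3, if_neg (by omega : ¬ m + 1 ≤ k + 1),
          if_pos (show m + 1 ≤ k + 1 + N by omega)]
        ring
      · -- m = k + N + 1
        have hm' : m = k + N + 1 := by omega
        subst hm'
        simp only [Ff, if_neg (by omega : ¬ k + N + 1 ≤ k),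
          if_pos (show k + N + 1 ≤ k + (N + 1) by omega),
          if_neg (by omega : ¬ k + N + 1 ≤ k + N),
          if_neg (by omega : ¬ k + N + 1 + 1 ≤ k + 1),
          if_neg (by omega : ¬ k + N + 1 + 1 ≤ k + 1 + N)]
        rw [show k + N + 1 - k - 1 = N by omega,
          show k + N + 1 + 1 - (k + 1) - 1 = N by omega, Nat.choose_self]
        have f2 : ((N + (k + 1)).factorial : ℚ) = (N + k + 1) * (N + k).factorial := by
          rw [show N + (k + 1) = N + k + 1 by omega, Nat.factorial_succ]
          push_cast; ring
        rw [f2]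
        field_simp
        push_cast
        ring
    · -- m ≥ k + N + 2
      obtain ⟨e, rfl⟩ := Nat.exists_eq_add_of_le (show k + N + 2 ≤ m by omega)
      simp only [Ff, if_neg (by omega : ¬ k + N + 2 + e ≤ k),
        if_neg (by omega : ¬ k + N + 2 + e ≤ k + (N + 1)),
        if_neg (by omega : ¬ k + N + 2 + e ≤ k + N),
        if_neg (by omega : ¬ k + N + 2 + e + 1 ≤ k + 1),
        if_neg (by omega : ¬ k + N + 2 + e + 1 ≤ k + 1 + N)]
      rw [show k + N + 2 + e - k - 1 = N + 1 + e by omega,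
        show k + N + 2 + e + 1 - (k + 1) - 1 = N + 1 + e by omega]
      have hc : ((N + 1 + e).choose (N + 1) : ℚ) * (N + 1)
          = ((N + 1 + e).choose N : ℚ) * (e + 1) := by
        have := Nat.choose_succ_right_eq (N + 1 + e) N
        rw [show N + 1 + e - N = e + 1 by omega] at this
        exact_mod_cast this
      rw [show N + 1 + k = N + (k + 1) by omega]
      have hx : ((N : ℚ) + k + 1) ≠ 0 := by positivity
      have fW : ((N + (k + 1)).factorial : ℚ)
          = ((N + k).factorial : ℚ) * ((N : ℚ) + k + 1) := by
        rw [show N + (k + 1) = N + k + 1 by omega, Nat.factorial_succ]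
        push_cast; ring
      have hB : (-1 : ℚ) ^ N * ((N + 1 + e).choose N : ℚ) * N.factorial
            / ((N + k).factorial : ℚ)
          = (-1 : ℚ) ^ N * ((N + 1 + e).choose N : ℚ) * N.factorial * ((N : ℚ) + k + 1)
              / ((N + (k + 1)).factorial : ℚ) := by
        rw [fW]; exact (mul_div_mul_right _ _ hx).symm
      rw [hB, ← mul_div_assoc, ← sub_div]
      congr 1
      rw [Nat.factorial_succ]
      push_cast at hc ⊢
      linear_combination (-(-1 : ℚ) ^ N * (N.factorial : ℚ)) * hc

lemma Smain (N m k : ℕ) (hm : 1 ≤ m) :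
    ∑ j ∈ Finset.range (N + 1), Tm m k N j = Ff N m k := by
  induction N generalizing m k with
  | zero =>
    simp only [Finset.sum_range_one, Tm, Ff]
    split_ifs with h1 h2
    · simp
    · omega
    · simp
  | succ N ih =>
    rw [Srec m k N hm, ih m k hm, ih (m + 1) (k + 1) (by omega), Frec m k N hm]


/-- Lemma 7.6(c): with `a(m,j) = (-1)^j C(N,j) C(m-1+j,j) j!`, the sum
`Σ_{j=0}^N a(m,j)/(j+k)!` equals `C(N+k-m,N) N!/(N+k)!` if `m ≤ k`, `0` if
`k+1 ≤ m ≤ k+N`, and `(-1)^N C(m-k-1,N) N!/(N+k)!` if `m > k+N`. -/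
theorem binomial_sum_identity (m N : ℕ) (hm : 1 ≤ m) (hN : 1 ≤ N) (k : ℕ) :
    ∑ j ∈ Finset.range (N + 1),
        ((-1 : ℚ) ^ j * (N.choose j) * ((m - 1 + j).choose j) * (j.factorial))
          / ((j + k).factorial)
      = if m ≤ k then ((N + k - m).choose N : ℚ) * N.factorial / (N + k).factorial
        else if m ≤ k + N then 0
        else (-1 : ℚ) ^ N * ((m - k - 1).choose N : ℚ) * N.factorial / (N + k).factorial :=
  Smain N m k hm
end
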